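/- arXiv:1309.6298 — 6 statements merged into one kernel-verified Lean document; each statement's English description precedes it below -/
import Mathlib

section
/- Let v^1,…,v^{n-1} ∈ ℝ^n and let M be the n×(n-1) real matrix whose columns are these vectors; for k ∈ [n] let M(k) denote the (n-1)×(n-1) matrix obtained from M by deleting row k. Assume the vectors are in general position, i.e., for every k ∈ [n] there is a unique permutation σ of [n-1] attaining the maximum max_{σ} Σ_i M(k)_{iσ(i)}. Then there exists a tropical hyperplane H(a) ⊆ ℝ_max^n containing all of v^1,…,v^{n-1}, and this hyperplane is unique as a subset of ℝ_max^n. -/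
open Finset

/-- The tropical hyperplane `H(a)` in `ℝ_max^n`: the set of points `x` where the maximum
`max_i (a_i + x_i)` is attained at least twice. -/
def tropHyperplane {n : ℕ} (a : Fin n → WithBot ℝ) : Set (Fin n → WithBot ℝ) :=
  {x | ∃ i j : Fin n, i ≠ j ∧ a i + x i = a j + x j ∧ ∀ l, a l + x l ≤ a i + x i}

open Function in
section


section Walk

lemma walk_lemma {m : ℕ} (σ : Fin m → Fin (m+1)) (hσ : Function.Injective σ)
    (khat : Fin (m+1)) (hkhat : ∀ ℓ, σ ℓ ≠ khat)
    (N : Fin m → Fin (m+1) → Prop)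
    (hNr : ∀ ℓ c, N ℓ c → c ≠ khat → ∃ ℓ', σ ℓ' = c)
    (hN : ∀ ℓ, ∃ c, N ℓ c ∧ c ≠ σ ℓ) (ℓ0 : Fin m) :
    ∃ (σ' : Fin m → Fin (m+1)) (D : Finset (Fin m)),
      Function.Injective σ' ∧ D.Nonempty ∧
      (∀ ℓ, ℓ ∉ D → σ' ℓ = σ ℓ) ∧
      (∀ ℓ, ℓ ∈ D → σ' ℓ ≠ σ ℓ ∧ N ℓ (σ' ℓ)) ∧
      (Finset.image σ' D = Finset.image σ D ∨
        (ℓ0 ∈ D ∧ Finset.image σ' D = insert khat ((Finset.image σ D).erase (σ ℓ0)))) := by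
  classical
  choose c hcN hcne using hN
  have hg : ∀ ℓ, c ℓ ≠ khat → ∃ ℓ', σ ℓ' = c ℓ := fun ℓ h => hNr ℓ (c ℓ) (hcN ℓ) h
  set stepf : Fin m → Fin m :=
    fun ℓ => if h : c ℓ = khat then ℓ else Classical.choose (hg ℓ h) with hstepf
  have hstep : ∀ ℓ, c ℓ ≠ khat → σ (stepf ℓ) = c ℓ := by
    intro ℓ h
    simp only [hstepf, dif_neg h]
    exact Classical.choose_spec (hg ℓ h)
  set x : ℕ → Fin m := fun t => stepf^[t] ℓ0 with hxdef
  have hx0 : x 0 = ℓ0 := rfl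
  have hxsucc : ∀ t, x (t+1) = stepf (x t) := fun t => Function.iterate_succ_apply' stepf t ℓ0
  have hrep : ∃ t, ∃ s, s < t ∧ x s = x t := by
    obtain ⟨s, t, hst, h⟩ := Finite.exists_ne_map_eq_of_infinite x
    rcases lt_or_gt_of_ne hst with h1 | h1
    exacts [⟨t, s, h1, h⟩, ⟨s, t, h1, h.symm⟩]
  obtain ⟨j, ⟨i, hij, hxij⟩, hmin⟩ :
      ∃ j, (∃ s, s < j ∧ x s = x j) ∧ ∀ t, t < j → ¬∃ s, s < t ∧ x s = x t :=
    ⟨Nat.find hrep, Nat.find_spec hrep, fun t ht => Nat.find_min hrep ht⟩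
  have hxinj : ∀ s t, s < t → t < j → x s ≠ x t := by
    intro s t hst htj heq
    exact hmin t htj ⟨s, hst, heq⟩
  have hnotkhat : ∀ t, t + 1 < j → c (x t) ≠ khat := by
    intro t ht h
    have hxx : x (t+1) = x t := by rw [hxsucc, hstepf]; simp [h]
    exact hxinj t (t+1) (Nat.lt_succ_self t) ht hxx.symm
  have hstepx : ∀ t, c (x t) ≠ khat → σ (x (t+1)) = c (x t) := by
    intro t h; rw [hxsucc]; exact hstep _ h
  obtain ⟨jm, rfl⟩ : ∃ jm, j = jm + 1 :=
    ⟨j - 1, (Nat.succ_pred_eq_of_pos (Nat.pos_of_ne_zero (by rintro rfl; omega))).symm⟩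
  by_cases hlast : c (x jm) = khat
  · -- path case
    have hck : ∀ t, t < jm → c (x t) ≠ khat := fun t ht => hnotkhat t (by omega)
    have hstep' : ∀ t, t < jm → σ (x (t+1)) = c (x t) := fun t ht => hstepx t (hck t ht)
    set P := (Finset.range (jm+1)).image x with hPdef
    have hmemP : ∀ ℓ, ℓ ∈ P ↔ ∃ t, t < jm + 1 ∧ x t = ℓ := by
      intro ℓ; simp [hPdef, Finset.mem_image]
    have hnext : ∀ t, t < jm → x (t+1) ∈ P := by
      intro t ht
      exact (hmemP _).2 ⟨t+1, by omega, rfl⟩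
    set σ' : Fin m → Fin (m+1) := fun ℓ => if ℓ ∈ P then c ℓ else σ ℓ with hσ'def
    have hσ'in : ∀ ℓ, ℓ ∈ P → σ' ℓ = c ℓ := fun ℓ h => by simp [hσ'def, h]
    have hσ'out : ∀ ℓ, ℓ ∉ P → σ' ℓ = σ ℓ := fun ℓ h => by simp [hσ'def, h]
    have hσ'inj : Function.Injective σ' := by
      intro ℓ1 ℓ2 h12
      by_cases h1 : ℓ1 ∈ P <;> by_cases h2 : ℓ2 ∈ P
      · obtain ⟨s, hs, rfl⟩ := (hmemP _).1 h1
        obtain ⟨t, ht, rfl⟩ := (hmemP _).1 h2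
        rw [hσ'in _ h1, hσ'in _ h2] at h12
        by_cases hsjm : s = jm <;> by_cases htjm : t = jm
        · rw [hsjm, htjm]
        · exact absurd (hlast ▸ hsjm ▸ h12).symm (hck t (by omega))
        · exact absurd (hlast ▸ htjm ▸ h12) (hck s (by omega))
        · rw [← hstep' s (by omega), ← hstep' t (by omega)] at h12
          have := hσ h12
          rcases lt_trichotomy s t with h | h | h
          · exact absurd this (hxinj (s+1) (t+1) (by omega) (by omega))
          · rw [h]
          · exact absurd this.symm (hxinj (t+1) (s+1) (by omega) (by omega))
      · obtain ⟨s, hs, rfl⟩ := (hmemP _).1 h1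
        rw [hσ'in _ h1, hσ'out _ h2] at h12
        by_cases hsjm : s = jm
        · subst hsjm
          rw [hlast] at h12
          exact absurd h12.symm (hkhat ℓ2)
        · rw [← hstep' s (by omega)] at h12
          exact absurd ((hσ h12) ▸ hnext s (by omega)) h2
      · obtain ⟨t, ht, rfl⟩ := (hmemP _).1 h2
        rw [hσ'out _ h1, hσ'in _ h2] at h12
        by_cases htjm : t = jm
        · subst htjm
          rw [hlast] at h12
          exact absurd h12 (hkhat ℓ1)
        · rw [← hstep' t (by omega)] at h12
          exact absurd ((hσ h12.symm) ▸ hnext t (by omega)) h1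
      · rw [hσ'out _ h1, hσ'out _ h2] at h12
        exact hσ h12
    have hxInjOn : Set.InjOn x (Finset.range (jm+1)) := by
      intro s hs t ht h
      simp only [Finset.coe_range, Set.mem_Iio] at hs ht
      rcases lt_trichotomy s t with h' | h' | h'
      · exact absurd h (hxinj s t h' (by omega))
      · exact h'
      · exact absurd h.symm (hxinj t s h' (by omega))
    have hcardP : P.card = jm + 1 := by
      rw [hPdef, Finset.card_image_of_injOn hxInjOn, Finset.card_range]
    have hℓ0P : ℓ0 ∈ P := (hmemP _).2 ⟨0, by omega, hx0⟩
    have hximg : ∀ t, t < jm + 1 → x t ∈ P := fun t ht => (hmemP _).2 ⟨t, ht, rfl⟩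
    have hsub : Finset.image σ' P ⊆ insert khat ((Finset.image σ P).erase (σ ℓ0)) := by
      intro k hk
      obtain ⟨ℓ, hℓ, rfl⟩ := Finset.mem_image.1 hk
      obtain ⟨t, ht, rfl⟩ := (hmemP _).1 hℓ
      rw [hσ'in _ hℓ]
      by_cases htjm : t = jm
      · rw [htjm, hlast]; exact Finset.mem_insert_self _ _
      · rw [← hstep' t (by omega)]
        refine Finset.mem_insert_of_mem (Finset.mem_erase.2 ⟨?_, Finset.mem_image_of_mem σ (hnext t (by omega))⟩)
        rw [← hx0]
        exact fun h => (hxinj 0 (t+1) (by omega) (by omega)) (hσ h).symm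
    have himg : Finset.image σ' P = insert khat ((Finset.image σ P).erase (σ ℓ0)) := by
      refine Finset.eq_of_subset_of_card_le hsub ?_
      have c1 : (Finset.image σ' P).card = jm + 1 := by
        rw [Finset.card_image_of_injOn (hσ'inj.injOn), hcardP]
      have c2 : (Finset.image σ P).card = jm + 1 := by
        rw [Finset.card_image_of_injOn (hσ.injOn), hcardP]
      have hmem0 : σ ℓ0 ∈ Finset.image σ P := Finset.mem_image_of_mem σ hℓ0P
      have c3 : ((Finset.image σ P).erase (σ ℓ0)).card = jm := by
        rw [Finset.card_erase_of_mem hmem0, c2]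
        omega
      have hkh : khat ∉ (Finset.image σ P).erase (σ ℓ0) := by
        intro h
        obtain ⟨ℓ, _, hℓ⟩ := Finset.mem_image.1 (Finset.mem_of_mem_erase h)
        exact hkhat ℓ hℓ
      rw [Finset.card_insert_of_notMem hkh, c3, c1]
    refine ⟨σ', P, hσ'inj, ⟨ℓ0, hℓ0P⟩, hσ'out, ?_, Or.inr ⟨hℓ0P, himg⟩⟩
    intro ℓ hℓ
    rw [hσ'in _ hℓ]
    exact ⟨hcne ℓ, hcN ℓ⟩
  · -- cycle case
    have hck : ∀ t, t ≤ jm → c (x t) ≠ khat := by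
      intro t ht
      by_cases h : t = jm
      · exact h ▸ hlast
      · exact hnotkhat t (by omega)
    have hstep' : ∀ t, t ≤ jm → σ (x (t+1)) = c (x t) := fun t ht => hstepx t (hck t ht)
    set P := (Finset.Ico i (jm+1)).image x with hPdef
    have hmemP : ∀ ℓ, ℓ ∈ P ↔ ∃ t, i ≤ t ∧ t < jm + 1 ∧ x t = ℓ := by
      intro ℓ; simp [hPdef, Finset.mem_image, Finset.mem_Ico]
      tauto
    have hnext : ∀ t, i ≤ t → t ≤ jm → x (t+1) ∈ P := by
      intro t ht1 ht2
      by_cases h : t = jm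
      · subst h
        rw [← hxij]
        exact (hmemP _).2 ⟨i, le_refl i, by omega, rfl⟩
      · exact (hmemP _).2 ⟨t+1, by omega, by omega, rfl⟩
    have keyne : ∀ s t, i ≤ s → s < t → t ≤ jm → x (s+1) ≠ x (t+1) := by
      intro s t hs hst ht heq
      by_cases h : t = jm
      · subst h
        rw [← hxij] at heq
        exact hxinj i (s+1) (by omega) (by omega) heq.symm
      · exact hxinj (s+1) (t+1) (by omega) (by omega) heq
    set σ' : Fin m → Fin (m+1) := fun ℓ => if ℓ ∈ P then c ℓ else σ ℓ with hσ'def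
    have hσ'in : ∀ ℓ, ℓ ∈ P → σ' ℓ = c ℓ := fun ℓ h => by simp [hσ'def, h]
    have hσ'out : ∀ ℓ, ℓ ∉ P → σ' ℓ = σ ℓ := fun ℓ h => by simp [hσ'def, h]
    have hσ'inj : Function.Injective σ' := by
      intro ℓ1 ℓ2 h12
      by_cases h1 : ℓ1 ∈ P <;> by_cases h2 : ℓ2 ∈ P
      · obtain ⟨s, hs1, hs2, rfl⟩ := (hmemP _).1 h1
        obtain ⟨t, ht1, ht2, rfl⟩ := (hmemP _).1 h2
        rw [hσ'in _ h1, hσ'in _ h2] at h12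
        rw [← hstep' s (by omega), ← hstep' t (by omega)] at h12
        have h12' := hσ h12
        rcases lt_trichotomy s t with h | h | h
        · exact absurd h12' (keyne s t hs1 h (by omega))
        · rw [h]
        · exact absurd h12'.symm (keyne t s ht1 h (by omega))
      · obtain ⟨s, hs1, hs2, rfl⟩ := (hmemP _).1 h1
        rw [hσ'in _ h1, hσ'out _ h2, ← hstep' s (by omega)] at h12
        exact absurd ((hσ h12) ▸ hnext s hs1 (by omega)) h2
      · obtain ⟨t, ht1, ht2, rfl⟩ := (hmemP _).1 h2
        rw [hσ'out _ h1, hσ'in _ h2, ← hstep' t (by omega)] at h12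
        exact absurd ((hσ h12.symm) ▸ hnext t ht1 (by omega)) h1
      · rw [hσ'out _ h1, hσ'out _ h2] at h12
        exact hσ h12
    have hsub : Finset.image σ' P ⊆ Finset.image σ P := by
      intro k hk
      obtain ⟨ℓ, hℓ, rfl⟩ := Finset.mem_image.1 hk
      obtain ⟨t, ht1, ht2, rfl⟩ := (hmemP _).1 hℓ
      rw [hσ'in _ hℓ, ← hstep' t (by omega)]
      exact Finset.mem_image_of_mem σ (hnext t ht1 (by omega))
    have himg : Finset.image σ' P = Finset.image σ P := by
      refine Finset.eq_of_subset_of_card_le hsub ?_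
      rw [Finset.card_image_of_injOn (hσ'inj.injOn), Finset.card_image_of_injOn (hσ.injOn)]
    refine ⟨σ', P, hσ'inj, ⟨x i, (hmemP _).2 ⟨i, le_refl i, by omega, rfl⟩⟩, hσ'out, ?_, Or.inl himg⟩
    intro ℓ hℓ
    rw [hσ'in _ hℓ]
    exact ⟨hcne ℓ, hcN ℓ⟩

end Walk

section Infra
variable {m : ℕ}

/-- value of a permutation-matching for the minor avoiding column `k`. -/
def valP (v : Fin m → Fin (m+1) → ℝ) (k : Fin (m+1)) (π : Equiv.Perm (Fin m)) : ℝ :=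
  ∑ i, v (π i) (k.succAbove i)

/-- tropical minor: the optimal assignment value avoiding column `k`. -/
noncomputable def tropa (v : Fin m → Fin (m+1) → ℝ) (k : Fin (m+1)) : ℝ :=
  Finset.univ.sup' ⟨1, Finset.mem_univ 1⟩ (valP v k)

/-- value of a matching given as a map points → columns. -/
def valE (v : Fin m → Fin (m+1) → ℝ) (σ : Fin m → Fin (m+1)) : ℝ :=
  ∑ ℓ, v ℓ (σ ℓ)

lemma le_tropa (v : Fin m → Fin (m+1) → ℝ) (k : Fin (m+1)) (π : Equiv.Perm (Fin m)) :
    valP v k π ≤ tropa v k :=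
  Finset.le_sup' _ (Finset.mem_univ π)

lemma surj_off (σ : Fin m → Fin (m+1)) (hσ : Injective σ) (k0 : Fin (m+1))
    (hk0 : ∀ ℓ, σ ℓ ≠ k0) : ∀ c, c ≠ k0 → ∃ ℓ, σ ℓ = c := by
  intro c hc
  have hsub : Finset.image σ univ ⊆ univ.erase k0 := by
    intro k hk
    obtain ⟨ℓ, _, rfl⟩ := mem_image.1 hk
    exact mem_erase.2 ⟨hk0 ℓ, mem_univ _⟩
  have heq : Finset.image σ univ = univ.erase k0 := by
    refine Finset.eq_of_subset_of_card_le hsub ?_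
    rw [card_erase_of_mem (mem_univ _), card_image_of_injOn hσ.injOn]
    simp
  have hc2 : c ∈ Finset.image σ univ := heq ▸ mem_erase.2 ⟨hc, mem_univ _⟩
  obtain ⟨ℓ, _, h⟩ := mem_image.1 hc2
  exact ⟨ℓ, h⟩

lemma exists_perm_of_matching (v : Fin m → Fin (m+1) → ℝ) (σ : Fin m → Fin (m+1))
    (hσ : Injective σ) (k0 : Fin (m+1)) (hk0 : ∀ ℓ, σ ℓ ≠ k0) :
    ∃ π : Equiv.Perm (Fin m), (∀ i, σ (π i) = k0.succAbove i) ∧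
      (∀ ℓ, σ ℓ = k0.succAbove (π.symm ℓ)) ∧ valE v σ = valP v k0 π := by
  classical
  have hch : ∀ i : Fin m, ∃ ℓ, σ ℓ = k0.succAbove i :=
    fun i => surj_off σ hσ k0 hk0 _ (Fin.succAbove_ne k0 i)
  choose π' hπ' using hch
  have hinj : Injective π' := by
    intro i i' h
    exact Fin.succAbove_right_injective (p := k0) (by rw [← hπ' i, ← hπ' i', h])
  have hbij : Bijective π' := (Finite.injective_iff_bijective).1 hinj
  refine ⟨Equiv.ofBijective π' hbij, fun i => hπ' i, ?_, ?_⟩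
  · intro ℓ
    have h := hπ' ((Equiv.ofBijective π' hbij).symm ℓ)
    rwa [show π' ((Equiv.ofBijective π' hbij).symm ℓ) = ℓ from
      (Equiv.ofBijective π' hbij).apply_symm_apply ℓ] at h
  · rw [valE, valP, ← Equiv.sum_comp (Equiv.ofBijective π' hbij) (fun ℓ => v ℓ (σ ℓ))]
    congr 1
    ext i
    rw [show (Equiv.ofBijective π' hbij) i = π' i from rfl, hπ' i]

lemma matching_of_perm (v : Fin m → Fin (m+1) → ℝ) (k0 : Fin (m+1)) (π : Equiv.Perm (Fin m)) :
    Injective (fun ℓ => k0.succAbove (π.symm ℓ)) ∧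
      (∀ ℓ, k0.succAbove (π.symm ℓ) ≠ k0) ∧
      valE v (fun ℓ => k0.succAbove (π.symm ℓ)) = valP v k0 π := by
  refine ⟨fun a b h => π.symm.injective (Fin.succAbove_right_injective h), fun ℓ => Fin.succAbove_ne k0 _, ?_⟩
  rw [valE, valP, ← Equiv.sum_comp π (fun ℓ => v ℓ (k0.succAbove (π.symm ℓ)))]
  simp

/-- `hgen` repackaged in terms of injective maps avoiding a column. -/
lemma hgen_matching (v : Fin m → Fin (m+1) → ℝ)
    (hgen : ∀ k : Fin (m + 1), ∃! σ : Equiv.Perm (Fin m),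
      ∀ π : Equiv.Perm (Fin m), valP v k π ≤ valP v k σ) (k0 : Fin (m+1)) :
    ∃ σs : Fin m → Fin (m+1), Injective σs ∧ (∀ ℓ, σs ℓ ≠ k0) ∧
      (∀ σ, Injective σ → (∀ ℓ, σ ℓ ≠ k0) → valE v σ ≤ valE v σs) ∧
      (∀ σ, Injective σ → (∀ ℓ, σ ℓ ≠ k0) →
        (∀ σ2, Injective σ2 → (∀ ℓ, σ2 ℓ ≠ k0) → valE v σ2 ≤ valE v σ) → σ = σs) ∧
      valE v σs = tropa v k0 := by
  obtain ⟨πs, hπmax, hπuniq⟩ := hgen k0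
  obtain ⟨hinj, havoid, hval⟩ := matching_of_perm v k0 πs
  refine ⟨fun ℓ => k0.succAbove (πs.symm ℓ), hinj, havoid, ?_, ?_, ?_⟩
  · intro σ hσ hk
    obtain ⟨π, _, _, hv⟩ := exists_perm_of_matching v σ hσ k0 hk
    rw [hv, hval]
    exact hπmax π
  · intro σ hσ hk hopt
    obtain ⟨π, _, hrec, hv⟩ := exists_perm_of_matching v σ hσ k0 hk
    have hπopt : ∀ τ : Equiv.Perm (Fin m), valP v k0 τ ≤ valP v k0 π := by
      intro τ
      obtain ⟨hi2, ha2, hv2⟩ := matching_of_perm v k0 τ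
      rw [← hv, ← hv2]
      exact hopt _ hi2 ha2
    have : π = πs := hπuniq π hπopt
    funext ℓ
    rw [hrec ℓ, this]
  · rw [hval]
    refine le_antisymm (Finset.le_sup' _ (Finset.mem_univ πs)) (Finset.sup'_le _ _ ?_)
    intro τ _
    exact hπmax τ

lemma existence_real (v : Fin m → Fin (m+1) → ℝ) (ℓ : Fin m) :
    ∃ ks k2 : Fin (m+1), ks ≠ k2 ∧ tropa v ks + v ℓ ks = tropa v k2 + v ℓ k2 ∧
      ∀ l, tropa v l + v ℓ l ≤ tropa v ks + v ℓ ks := by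
  classical
  obtain ⟨ks, -, hmax⟩ := Finset.exists_max_image (univ : Finset (Fin (m+1)))
    (fun k => tropa v k + v ℓ k) ⟨0, mem_univ 0⟩
  have hmax' : ∀ l, tropa v l + v ℓ l ≤ tropa v ks + v ℓ ks := fun l => hmax l (mem_univ l)
  obtain ⟨πs, -, hπs⟩ := Finset.exists_mem_eq_sup' (⟨1, Finset.mem_univ 1⟩ :
    (univ : Finset (Equiv.Perm (Fin m))).Nonempty) (valP v ks)
  set i0 := πs.symm ℓ with hi0
  set k2 := ks.succAbove i0 with hk2
  have hne : ks ≠ k2 := (Fin.succAbove_ne ks i0).symm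
  set f : Fin (m+1) → Fin m := fun r =>
    if h : r = ks then ℓ else πs (Classical.choose (Fin.exists_succAbove_eq h)) with hfdef
  have hf1 : f ks = ℓ := by simp [hfdef]
  have hchar : ∀ r, (h : r ≠ ks) → ∃ z, ks.succAbove z = r ∧ f r = πs z := by
    intro r h
    exact ⟨Classical.choose (Fin.exists_succAbove_eq h),
      Classical.choose_spec (Fin.exists_succAbove_eq h), by simp [hfdef, dif_neg h]⟩
  have hf2 : ∀ i, f (ks.succAbove i) = πs i := by
    intro i
    obtain ⟨z, hz1, hz2⟩ := hchar (ks.succAbove i) (Fin.succAbove_ne ks i)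
    rw [hz2, Fin.succAbove_right_injective (p := ks) hz1]
  have hfk2 : f k2 = ℓ := by rw [hk2, hf2, hi0, Equiv.apply_symm_apply]
  set g : Fin m → Fin m := fun j => f (k2.succAbove j) with hgdef
  have hginj : Injective g := by
    intro j1 j2 h12
    have hr1 : k2.succAbove j1 ≠ k2 := Fin.succAbove_ne k2 j1
    have hr2 : k2.succAbove j2 ≠ k2 := Fin.succAbove_ne k2 j2
    simp only [hgdef] at h12
    by_cases h1 : k2.succAbove j1 = ks <;> by_cases h2 : k2.succAbove j2 = ks
    · exact Fin.succAbove_right_injective (p := k2) (h1.trans h2.symm)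
    · obtain ⟨z2, hz1, hz2⟩ := hchar _ h2
      rw [h1, hf1, hz2] at h12
      have hz2i : z2 = i0 := πs.injective (by rw [← h12, hi0, Equiv.apply_symm_apply])
      rw [hz2i, ← hk2] at hz1
      exact absurd hz1.symm hr2
    · obtain ⟨z1, hz1, hz2⟩ := hchar _ h1
      rw [h2, hf1, hz2] at h12
      have hz1i : z1 = i0 := πs.injective (by rw [h12, hi0, Equiv.apply_symm_apply])
      rw [hz1i, ← hk2] at hz1
      exact absurd hz1.symm hr1
    · obtain ⟨z1, hz11, hz12⟩ := hchar _ h1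
      obtain ⟨z2, hz21, hz22⟩ := hchar _ h2
      rw [hz12, hz22] at h12
      have hzz : z1 = z2 := πs.injective h12
      exact Fin.succAbove_right_injective (p := k2) (by rw [← hz11, ← hz21, hzz])
  have hgbij : Bijective g := (Finite.injective_iff_bijective).1 hginj
  set τ : Equiv.Perm (Fin m) := Equiv.ofBijective g hgbij with hτdef
  have hsum1 : ∑ r, v (f r) r = v ℓ ks + tropa v ks := by
    have hπs' : tropa v ks = valP v ks πs := hπs
    rw [Fin.sum_univ_succAbove (fun r => v (f r) r) ks, hf1, hπs', valP]
    congr 1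
    exact Finset.sum_congr rfl fun i _ => by rw [hf2]
  have hsum2 : ∑ r, v (f r) r = v ℓ k2 + valP v k2 τ := by
    rw [Fin.sum_univ_succAbove (fun r => v (f r) r) k2, hfk2, valP]
    congr 1
  have hle : valP v k2 τ ≤ tropa v k2 := Finset.le_sup' _ (Finset.mem_univ τ)
  have hkey : tropa v ks + v ℓ ks ≤ tropa v k2 + v ℓ k2 := by
    linarith [hsum1, hsum2, hle]
  exact ⟨ks, k2, hne, le_antisymm hkey (hmax' k2), hmax'⟩

end Infra

section Uniq
variable {m : ℕ}

lemma valE_diff (v : Fin m → Fin (m+1) → ℝ) (σ σ' : Fin m → Fin (m+1)) (D : Finset (Fin m))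
    (hout : ∀ ℓ, ℓ ∉ D → σ' ℓ = σ ℓ) :
    valE v σ' - valE v σ = ∑ ℓ ∈ D, (v ℓ (σ' ℓ) - v ℓ (σ ℓ)) := by
  rw [valE, valE, ← Finset.sum_sub_distrib]
  refine (Finset.sum_subset (Finset.subset_univ D) ?_).symm
  intro ℓ _ hℓ
  rw [hout ℓ hℓ, sub_self]

lemma sum_alpha (α : Fin (m+1) → ℝ) (σ : Fin m → Fin (m+1)) (hσ : Function.Injective σ)
    (D : Finset (Fin m)) : ∑ ℓ ∈ D, α (σ ℓ) = ∑ k ∈ D.image σ, α k :=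
  (Finset.sum_image (fun x _ y _ h => hσ h)).symm

lemma img_univ (σ : Fin m → Fin (m+1)) (hσ : Function.Injective σ) (k0 : Fin (m+1))
    (hk0 : ∀ ℓ, σ ℓ ≠ k0) : Finset.image σ univ = univ.erase k0 := by
  have hsub : Finset.image σ univ ⊆ univ.erase k0 := by
    intro k hk
    obtain ⟨ℓ, _, rfl⟩ := mem_image.1 hk
    exact mem_erase.2 ⟨hk0 ℓ, mem_univ _⟩
  refine Finset.eq_of_subset_of_card_le hsub ?_
  rw [card_erase_of_mem (mem_univ _), card_image_of_injOn hσ.injOn]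
  simp

lemma swap_ge (v : Fin m → Fin (m+1) → ℝ) (M : Fin m → ℝ) (α : Fin (m+1) → ℝ)
    (σ σ' : Fin m → Fin (m+1)) (hσ : Function.Injective σ) (hσ' : Function.Injective σ')
    (D : Finset (Fin m)) (hout : ∀ ℓ, ℓ ∉ D → σ' ℓ = σ ℓ)
    (hnew : ∀ ℓ, ℓ ∈ D → α (σ' ℓ) + v ℓ (σ' ℓ) = M ℓ)
    (hold : ∀ ℓ, ℓ ∈ D → α (σ ℓ) + v ℓ (σ ℓ) ≤ M ℓ)
    (himg : D.image σ' = D.image σ) :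
    valE v σ ≤ valE v σ' := by
  have h1 : ∑ ℓ ∈ D, α (σ ℓ) = ∑ ℓ ∈ D, α (σ' ℓ) := by
    rw [sum_alpha α σ hσ D, sum_alpha α σ' hσ' D, himg]
  have h2 : ∑ ℓ ∈ D, (α (σ ℓ) - α (σ' ℓ)) ≤ ∑ ℓ ∈ D, (v ℓ (σ' ℓ) - v ℓ (σ ℓ)) := by
    refine Finset.sum_le_sum ?_
    intro ℓ hℓ
    have := hnew ℓ hℓ
    have := hold ℓ hℓ
    linarith
  have h3 : ∑ ℓ ∈ D, (α (σ ℓ) - α (σ' ℓ)) = 0 := by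
    rw [Finset.sum_sub_distrib, h1, sub_self]
  have h4 := valE_diff v σ σ' D hout
  linarith

lemma swap_path (v : Fin m → Fin (m+1) → ℝ) (M : Fin m → ℝ) (α : Fin (m+1) → ℝ)
    (σ σ' : Fin m → Fin (m+1)) (hσ : Function.Injective σ) (hσ' : Function.Injective σ')
    (D : Finset (Fin m)) (ℓ0 : Fin m) (khat : Fin (m+1))
    (hout : ∀ ℓ, ℓ ∉ D → σ' ℓ = σ ℓ) (hℓ0 : ℓ0 ∈ D)
    (hnew : ∀ ℓ, ℓ ∈ D → α (σ' ℓ) + v ℓ (σ' ℓ) = M ℓ)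
    (hold : ∀ ℓ, ℓ ∈ D → α (σ ℓ) + v ℓ (σ ℓ) ≤ M ℓ)
    (hstrict : α (σ ℓ0) + v ℓ0 (σ ℓ0) < M ℓ0)
    (hkh : khat ∉ D.image σ)
    (himg : D.image σ' = insert khat ((D.image σ).erase (σ ℓ0))) :
    valE v σ + α (σ ℓ0) < valE v σ' + α khat := by
  have hs' : ∑ ℓ ∈ D, α (σ' ℓ) = α khat + (∑ ℓ ∈ D, α (σ ℓ) - α (σ ℓ0)) := by
    rw [sum_alpha α σ' hσ' D, himg,
      Finset.sum_insert (fun h => hkh (Finset.mem_of_mem_erase h))]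
    congr 1
    rw [Finset.sum_erase_eq_sub (Finset.mem_image_of_mem σ hℓ0), ← sum_alpha α σ hσ D]
  have h2 : ∑ ℓ ∈ D, v ℓ (σ ℓ) < ∑ ℓ ∈ D, (M ℓ - α (σ ℓ)) :=
    Finset.sum_lt_sum (fun ℓ hℓ => by linarith [hold ℓ hℓ]) ⟨ℓ0, hℓ0, by linarith⟩
  have h3 : ∑ ℓ ∈ D, v ℓ (σ' ℓ) = ∑ ℓ ∈ D, (M ℓ - α (σ' ℓ)) :=
    Finset.sum_congr rfl fun ℓ hℓ => by linarith [hnew ℓ hℓ]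
  have h4 := valE_diff v σ σ' D hout
  have h5 : ∑ ℓ ∈ D, (v ℓ (σ' ℓ) - v ℓ (σ ℓ)) = ∑ ℓ ∈ D, v ℓ (σ' ℓ) - ∑ ℓ ∈ D, v ℓ (σ ℓ) :=
    Finset.sum_sub_distrib _ _
  have h6 : ∑ ℓ ∈ D, (M ℓ - α (σ' ℓ)) = ∑ ℓ ∈ D, M ℓ - ∑ ℓ ∈ D, α (σ' ℓ) :=
    Finset.sum_sub_distrib _ _
  have h7 : ∑ ℓ ∈ D, (M ℓ - α (σ ℓ)) = ∑ ℓ ∈ D, M ℓ - ∑ ℓ ∈ D, α (σ ℓ) :=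
    Finset.sum_sub_distrib _ _
  linarith

lemma uniq_shift (v : Fin m → Fin (m+1) → ℝ)
    (hgen : ∀ k : Fin (m + 1), ∃! σ : Equiv.Perm (Fin m),
      ∀ π : Equiv.Perm (Fin m), valP v k π ≤ valP v k σ)
    (hm : 0 < m) (a' : Fin (m+1) → WithBot ℝ) (M : Fin m → ℝ)
    (hfeas : ∀ ℓ k, a' k + ((v ℓ k : ℝ) : WithBot ℝ) ≤ ((M ℓ : ℝ) : WithBot ℝ))
    (htight2 : ∀ ℓ : Fin m, ∃ k k', k ≠ k' ∧
      a' k + ((v ℓ k : ℝ) : WithBot ℝ) = ((M ℓ : ℝ) : WithBot ℝ) ∧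
      a' k' + ((v ℓ k' : ℝ) : WithBot ℝ) = ((M ℓ : ℝ) : WithBot ℝ)) :
    ∃ c : ℝ, ∀ k, a' k = ((tropa v k + c : ℝ) : WithBot ℝ) := by
  classical
  set T : Fin m → Fin (m+1) → Prop :=
    fun ℓ k => a' k + ((v ℓ k : ℝ) : WithBot ℝ) = ((M ℓ : ℝ) : WithBot ℝ) with hT
  set α : Fin (m+1) → ℝ := fun k => (a' k).unbotD 0 with hα
  have htbot : ∀ ℓ k, T ℓ k → a' k ≠ ⊥ := by
    intro ℓ k h hbot
    rw [hT] at h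
    simp only [hbot, WithBot.bot_add] at h
    exact (WithBot.bot_ne_coe) h
  have hαa : ∀ k, a' k ≠ ⊥ → a' k = ((α k : ℝ) : WithBot ℝ) := by
    intro k h
    rw [hα]
    cases hk : a' k with
    | bot => exact absurd hk h
    | coe x => simp [hk]
  have htreal : ∀ ℓ k, T ℓ k → α k + v ℓ k = M ℓ := by
    intro ℓ k h
    have h' : a' k + ((v ℓ k : ℝ) : WithBot ℝ) = ((M ℓ : ℝ) : WithBot ℝ) := h
    rw [hαa k (htbot ℓ k h), ← WithBot.coe_add] at h'
    exact_mod_cast h'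
  have hfreal : ∀ ℓ k, a' k ≠ ⊥ → α k + v ℓ k ≤ M ℓ := by
    intro ℓ k h
    have h' := hfeas ℓ k
    rw [hαa k h, ← WithBot.coe_add] at h'
    exact_mod_cast h'
  have hNok : ∀ σ : Fin m → Fin (m+1), ∀ ℓ, ∃ c, T ℓ c ∧ c ≠ σ ℓ := by
    intro σ ℓ
    obtain ⟨k, k', hne, h1, h2⟩ := htight2 ℓ
    by_cases h : k = σ ℓ
    · exact ⟨k', h2, fun hh => hne (h.trans hh.symm)⟩
    · exact ⟨k, h1, h⟩
  -- Step A: all coefficients are finite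
  have hbotall : ∀ k, a' k ≠ ⊥ := by
    by_contra hc
    push_neg at hc
    obtain ⟨kb, hkb⟩ := hc
    obtain ⟨σs, hinj, havoid, hmax, huniq, hval⟩ := hgen_matching v hgen kb
    obtain ⟨σ', D, hσ'inj, hDne, hout, hin, hcase⟩ := walk_lemma σs hinj kb havoid T
      (fun ℓ c hc hne => surj_off σs hinj kb havoid c hne) (hNok σs) ⟨0, hm⟩
    rcases hcase with himg | ⟨hl0, himg⟩
    · have hgood : ∀ ℓ, ℓ ∈ D → a' (σs ℓ) ≠ ⊥ := by
        intro ℓ hℓ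
        have hmem : σs ℓ ∈ D.image σ' := by
          rw [himg]; exact Finset.mem_image_of_mem _ hℓ
        obtain ⟨ℓ', hℓ', he⟩ := Finset.mem_image.1 hmem
        exact he ▸ htbot ℓ' (σ' ℓ') (hin ℓ' hℓ').2
      have hge : valE v σs ≤ valE v σ' := swap_ge v M α σs σ' hinj hσ'inj D hout
        (fun ℓ hℓ => htreal ℓ (σ' ℓ) (hin ℓ hℓ).2)
        (fun ℓ hℓ => hfreal ℓ (σs ℓ) (hgood ℓ hℓ)) himg
      have havoid' : ∀ ℓ, σ' ℓ ≠ kb := by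
        intro ℓ
        by_cases hℓ : ℓ ∈ D
        · have hmem : σ' ℓ ∈ D.image σs := by
            rw [← himg]; exact Finset.mem_image_of_mem _ hℓ
          obtain ⟨ℓ', _, he⟩ := Finset.mem_image.1 hmem
          exact he ▸ havoid ℓ'
        · rw [hout ℓ hℓ]; exact havoid ℓ
      have heqσ : σ' = σs := huniq σ' hσ'inj havoid'
        (fun σ2 h1 h2 => le_trans (hmax σ2 h1 h2) hge)
      obtain ⟨ℓ, hℓ⟩ := hDne
      exact (hin ℓ hℓ).1 (by rw [heqσ])
    · have hmem : kb ∈ D.image σ' := by rw [himg]; exact Finset.mem_insert_self _ _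
      obtain ⟨ℓ', hℓ', he⟩ := Finset.mem_image.1 hmem
      exact htbot ℓ' (σ' ℓ') (hin ℓ' hℓ').2 (by rw [he]; exact hkb)
  -- Step 2: at the maximizer of Φ k = tropa v k - α k, the optimal matching is all-tight
  obtain ⟨k1, -, hk1max⟩ := Finset.exists_max_image (univ : Finset (Fin (m+1)))
    (fun k => tropa v k - α k) ⟨0, mem_univ 0⟩
  have hk1max' : ∀ k, tropa v k - α k ≤ tropa v k1 - α k1 := fun k => hk1max k (mem_univ k)
  obtain ⟨σ1, hinj1, havoid1, hmax1, huniq1, hval1⟩ := hgen_matching v hgen k1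
  have hcycle : ∀ (σ' : Fin m → Fin (m+1)) (D : Finset (Fin m)),
      Function.Injective σ' → D.Nonempty →
      (∀ ℓ, ℓ ∉ D → σ' ℓ = σ1 ℓ) → (∀ ℓ, ℓ ∈ D → σ' ℓ ≠ σ1 ℓ ∧ T ℓ (σ' ℓ)) →
      D.image σ' = D.image σ1 → False := by
    intro σ' D hσ'inj hDne hout hin himg
    have hge : valE v σ1 ≤ valE v σ' := swap_ge v M α σ1 σ' hinj1 hσ'inj D hout
      (fun ℓ hℓ => htreal ℓ (σ' ℓ) (hin ℓ hℓ).2)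
      (fun ℓ hℓ => hfreal ℓ (σ1 ℓ) (hbotall _)) himg
    have havoid' : ∀ ℓ, σ' ℓ ≠ k1 := by
      intro ℓ
      by_cases hℓ : ℓ ∈ D
      · have hmem : σ' ℓ ∈ D.image σ1 := by
          rw [← himg]; exact Finset.mem_image_of_mem _ hℓ
        obtain ⟨ℓ', _, he⟩ := Finset.mem_image.1 hmem
        exact he ▸ havoid1 ℓ'
      · rw [hout ℓ hℓ]; exact havoid1 ℓ
    have heqσ : σ' = σ1 := huniq1 σ' hσ'inj havoid'
      (fun σ2 h1 h2 => le_trans (hmax1 σ2 h1 h2) hge)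
    obtain ⟨ℓ, hℓ⟩ := hDne
    exact (hin ℓ hℓ).1 (by rw [heqσ])
  have htight1 : ∀ ℓ, T ℓ (σ1 ℓ) := by
    by_contra hcon
    push_neg at hcon
    obtain ⟨ℓ0, hℓ0⟩ := hcon
    obtain ⟨σ', D, hσ'inj, hDne, hout, hin, hcase⟩ := walk_lemma σ1 hinj1 k1 havoid1 T
      (fun ℓ c hc hne => surj_off σ1 hinj1 k1 havoid1 c hne) (hNok σ1) ℓ0
    rcases hcase with himg | ⟨hl0, himg⟩
    · exact hcycle σ' D hσ'inj hDne hout hin himg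
    · have hstrict : α (σ1 ℓ0) + v ℓ0 (σ1 ℓ0) < M ℓ0 := by
        refine lt_of_le_of_ne (hfreal ℓ0 (σ1 ℓ0) (hbotall _)) ?_
        intro he
        apply hℓ0
        show a' (σ1 ℓ0) + _ = _
        rw [hαa (σ1 ℓ0) (hbotall _), ← WithBot.coe_add, he]
      have hkh : k1 ∉ D.image σ1 := by
        intro h
        obtain ⟨ℓ', _, he⟩ := Finset.mem_image.1 h
        exact havoid1 ℓ' he
      have hlt := swap_path v M α σ1 σ' hinj1 hσ'inj D ℓ0 k1 hout hl0
        (fun ℓ hℓ => htreal ℓ (σ' ℓ) (hin ℓ hℓ).2)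
        (fun ℓ hℓ => hfreal ℓ (σ1 ℓ) (hbotall _)) hstrict hkh himg
      have havoid' : ∀ ℓ, σ' ℓ ≠ σ1 ℓ0 := by
        intro ℓ
        by_cases hℓ : ℓ ∈ D
        · have hmem : σ' ℓ ∈ D.image σ' := Finset.mem_image_of_mem _ hℓ
          rw [himg] at hmem
          rcases Finset.mem_insert.1 hmem with h | h
          · rw [h]; exact fun hh => havoid1 ℓ0 hh.symm
          · exact Finset.ne_of_mem_erase h
        · rw [hout ℓ hℓ]
          exact fun hh => hℓ (hinj1 hh ▸ hl0)
      have hup : valE v σ' ≤ tropa v (σ1 ℓ0) := by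
        obtain ⟨σ0, hinj0, havoid0, hmax0, -, hval0⟩ := hgen_matching v hgen (σ1 ℓ0)
        rw [← hval0]
        exact hmax0 σ' hσ'inj havoid'
      have hφ := hk1max' (σ1 ℓ0)
      rw [hval1] at hlt
      linarith
  have hGall : ∀ k0 : Fin (m+1), ∃ τ : Fin m → Fin (m+1), Function.Injective τ ∧
      (∀ ℓ, τ ℓ ≠ k0) ∧ ∀ ℓ, T ℓ (τ ℓ) := by
    intro k0
    rcases eq_or_ne k0 k1 with rfl | hne
    · exact ⟨σ1, hinj1, havoid1, htight1⟩
    by_contra hno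
    obtain ⟨ℓ0, hℓ0eq⟩ := surj_off σ1 hinj1 k1 havoid1 k0 hne
    obtain ⟨σ', D, hσ'inj, hDne, hout, hin, hcase⟩ := walk_lemma σ1 hinj1 k1 havoid1 T
      (fun ℓ c hc hne' => surj_off σ1 hinj1 k1 havoid1 c hne') (hNok σ1) ℓ0
    rcases hcase with himg | ⟨hl0, himg⟩
    · exact hcycle σ' D hσ'inj hDne hout hin himg
    · apply hno
      refine ⟨σ', hσ'inj, ?_, ?_⟩
      · intro ℓ
        rw [← hℓ0eq]
        by_cases hℓ : ℓ ∈ D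
        · have hmem : σ' ℓ ∈ D.image σ' := Finset.mem_image_of_mem _ hℓ
          rw [himg] at hmem
          rcases Finset.mem_insert.1 hmem with h | h
          · rw [h]; exact fun hh => havoid1 ℓ0 hh.symm
          · exact Finset.ne_of_mem_erase h
        · rw [hout ℓ hℓ]
          exact fun hh => hℓ (hinj1 hh ▸ hl0)
      · intro ℓ
        by_cases hℓ : ℓ ∈ D
        · exact (hin ℓ hℓ).2
        · rw [hout ℓ hℓ]; exact htight1 ℓ
  -- final equations
  refine ⟨∑ k, α k - ∑ ℓ, M ℓ, fun k0 => ?_⟩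
  obtain ⟨τ, hτinj, hτavoid, hτtight⟩ := hGall k0
  have hτval : valE v τ = ∑ ℓ, M ℓ - ∑ k ∈ univ.erase k0, α k := by
    have h1 : ∀ ℓ : Fin m, v ℓ (τ ℓ) = M ℓ - α (τ ℓ) := fun ℓ => by
      linarith [htreal ℓ _ (hτtight ℓ)]
    rw [valE]
    calc ∑ ℓ, v ℓ (τ ℓ) = ∑ ℓ, (M ℓ - α (τ ℓ)) := Finset.sum_congr rfl fun ℓ _ => h1 ℓ
      _ = ∑ ℓ, M ℓ - ∑ ℓ, α (τ ℓ) := Finset.sum_sub_distrib _ _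
      _ = ∑ ℓ, M ℓ - ∑ k ∈ univ.erase k0, α k := by
          rw [sum_alpha α τ hτinj univ, img_univ τ hτinj k0 hτavoid]
  obtain ⟨σ0, hinj0, havoid0, hmax0, huniq0, hval0⟩ := hgen_matching v hgen k0
  have hopt : ∀ σ2, Function.Injective σ2 → (∀ ℓ, σ2 ℓ ≠ k0) → valE v σ2 ≤ valE v τ := by
    intro σ2 h2 ha2
    rw [hτval]
    have hb : ∀ ℓ : Fin m, v ℓ (σ2 ℓ) ≤ M ℓ - α (σ2 ℓ) := fun ℓ => by
      linarith [hfreal ℓ _ (hbotall (σ2 ℓ))]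
    calc valE v σ2 = ∑ ℓ, v ℓ (σ2 ℓ) := rfl
      _ ≤ ∑ ℓ, (M ℓ - α (σ2 ℓ)) := Finset.sum_le_sum fun ℓ _ => hb ℓ
      _ = ∑ ℓ, M ℓ - ∑ ℓ, α (σ2 ℓ) := Finset.sum_sub_distrib _ _
      _ = ∑ ℓ, M ℓ - ∑ k ∈ univ.erase k0, α k := by
          rw [sum_alpha α σ2 h2 univ, img_univ σ2 h2 k0 ha2]
  have hτσ0 : τ = σ0 := huniq0 τ hτinj hτavoid hopt
  have htropa : tropa v k0 = ∑ ℓ, M ℓ - ∑ k ∈ univ.erase k0, α k := by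
    rw [← hval0, ← hτσ0, hτval]
  have hsum : ∑ k ∈ univ.erase k0, α k = ∑ k, α k - α k0 :=
    Finset.sum_erase_eq_sub (mem_univ k0)
  rw [hαa k0 (hbotall k0)]
  exact_mod_cast congrArg (fun (r : ℝ) => ((r : ℝ) : WithBot ℝ))
    (by rw [htropa, hsum]; ring : α k0 = tropa v k0 + (∑ k, α k - ∑ ℓ, M ℓ))

end Uniq

lemma shift_hyperplane {n : ℕ} (b : Fin n → WithBot ℝ) (c : ℝ) :
    tropHyperplane (fun k => ((c : WithBot ℝ) + b k)) = tropHyperplane b := by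
  ext x
  simp only [tropHyperplane, Set.mem_setOf_eq]
  have key : ∀ i, ((c : WithBot ℝ) + b i) + x i = (c : WithBot ℝ) + (b i + x i) :=
    fun i => add_assoc _ _ _
  constructor
  · rintro ⟨i, j, hij, heq, hmax⟩
    refine ⟨i, j, hij, ?_, ?_⟩
    · rw [key, key] at heq
      exact WithBot.add_left_cancel WithBot.coe_ne_bot heq
    · intro l
      have h := hmax l
      rw [key, key] at h
      exact (WithBot.add_le_add_iff_left WithBot.coe_ne_bot).1 h
  · rintro ⟨i, j, hij, heq, hmax⟩
    refine ⟨i, j, hij, ?_, ?_⟩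
    · rw [key, key, heq]
    · intro l
      rw [key, key]
      exact (WithBot.add_le_add_iff_left WithBot.coe_ne_bot).2 (hmax l)


end

/-- Tropical Cramer theorem, "complex" version: `m` vectors of `ℝ^{m+1}` in general
position are contained in a unique tropical hyperplane. -/
theorem stmt0 (m : ℕ) (v : Fin m → Fin (m + 1) → ℝ)
    (hgen : ∀ k : Fin (m + 1), ∃! σ : Equiv.Perm (Fin m),
      ∀ π : Equiv.Perm (Fin m),
        ∑ i, v (π i) (k.succAbove i) ≤ ∑ i, v (σ i) (k.succAbove i)) :
    ∃! H : Set (Fin (m + 1) → WithBot ℝ),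
      (∃ a : Fin (m + 1) → WithBot ℝ, (∃ i, a i ≠ ⊥) ∧ H = tropHyperplane a) ∧
      ∀ ℓ : Fin m, (fun i => ((v ℓ i : ℝ) : WithBot ℝ)) ∈ H := by
  classical
  have hgen' : ∀ k : Fin (m + 1), ∃! σ : Equiv.Perm (Fin m),
      ∀ π : Equiv.Perm (Fin m), valP v k π ≤ valP v k σ := hgen
  refine ⟨tropHyperplane (fun k => ((tropa v k : ℝ) : WithBot ℝ)),
    ⟨⟨fun k => ((tropa v k : ℝ) : WithBot ℝ), ⟨0, WithBot.coe_ne_bot⟩, rfl⟩, ?_⟩, ?_⟩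
  · intro ℓ
    obtain ⟨ks, k2, hne, heq, hmax⟩ := existence_real v ℓ
    refine ⟨ks, k2, hne, ?_, fun l => ?_⟩
    · show ((tropa v ks : ℝ) : WithBot ℝ) + ((v ℓ ks : ℝ) : WithBot ℝ)
        = ((tropa v k2 : ℝ) : WithBot ℝ) + ((v ℓ k2 : ℝ) : WithBot ℝ)
      exact_mod_cast heq
    · show ((tropa v l : ℝ) : WithBot ℝ) + ((v ℓ l : ℝ) : WithBot ℝ)
        ≤ ((tropa v ks : ℝ) : WithBot ℝ) + ((v ℓ ks : ℝ) : WithBot ℝ)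
      exact_mod_cast hmax l
  · rintro H ⟨⟨a', hnt, rfl⟩, hmemb⟩
    rcases Nat.eq_zero_or_pos m with hm0 | hm
    · subst hm0
      ext x
      simp only [tropHyperplane, Set.mem_setOf_eq]
      constructor <;> rintro ⟨i, j, hij, -⟩ <;> exact absurd (Subsingleton.elim (α := Fin 1) i j) hij
    · have hMex : ∀ ℓ : Fin m, ∃ r : ℝ,
          (∀ k, a' k + ((v ℓ k : ℝ) : WithBot ℝ) ≤ ((r : ℝ) : WithBot ℝ)) ∧
          ∃ k k', k ≠ k' ∧ a' k + ((v ℓ k : ℝ) : WithBot ℝ) = ((r : ℝ) : WithBot ℝ) ∧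
            a' k' + ((v ℓ k' : ℝ) : WithBot ℝ) = ((r : ℝ) : WithBot ℝ) := by
        intro ℓ
        obtain ⟨i, j, hij, heq, hmax⟩ := hmemb ℓ
        obtain ⟨w, hw⟩ := hnt
        have hne : a' i + ((v ℓ i : ℝ) : WithBot ℝ) ≠ ⊥ := by
          intro h
          have h2 := hmax w
          rw [h, le_bot_iff] at h2
          exact (WithBot.add_ne_bot.2 ⟨hw, WithBot.coe_ne_bot⟩) h2
        obtain ⟨r, hr⟩ := WithBot.ne_bot_iff_exists.1 hne
        refine ⟨r, ?_, i, j, hij, hr.symm, ?_⟩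
        · intro k; rw [hr]; exact hmax k
        · rw [← heq]; exact hr.symm
      choose M hM1 hM2 using hMex
      obtain ⟨c, hc⟩ := uniq_shift v hgen' hm a' M hM1 hM2
      have ha'eq : a' = fun k => (c : WithBot ℝ) + ((tropa v k : ℝ) : WithBot ℝ) := by
        funext k
        rw [hc k, WithBot.coe_add, add_comm]
      rw [ha'eq, shift_hyperplane]
end

section
/- A collection of n vectors v^1,…,v^n ∈ ℝ^n is contained in some tropical hyperplane if and only if the n×n real matrix A whose columns are v^1,…,v^n is tropically singular, i.e., the maximum max_{σ∈S_n} Σ_{i∈[n]} A_{iσ(i)} over all permutations σ of [n] is attained by at least two distinct permutations. -/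
open Finset

private lemma sum_perm_symm {n : ℕ} (v : Fin n → Fin n → ℝ) (ρ : Equiv.Perm (Fin n)) :
    ∑ i, v (ρ i) i = ∑ j, v j (ρ.symm j) :=
  Fintype.sum_equiv ρ _ _ (by intro i; rw [Equiv.symm_apply_apply])

/-- `n` vectors of `ℝ^n` are contained in a tropical hyperplane iff the matrix having
these vectors as columns is tropically singular (the associated optimal assignment
problem has at least two optimal permutations). -/
theorem stmt1 (n : ℕ) (v : Fin n → Fin n → ℝ) :
    (∃ a : Fin n → WithBot ℝ, (∃ i, a i ≠ ⊥) ∧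
        ∀ j : Fin n, (fun i => ((v j i : ℝ) : WithBot ℝ)) ∈ tropHyperplane a) ↔
    (∃ σ π : Equiv.Perm (Fin n), σ ≠ π ∧
        (∀ ρ : Equiv.Perm (Fin n), ∑ i, v (ρ i) i ≤ ∑ i, v (σ i) i) ∧
        ∑ i, v (π i) i = ∑ i, v (σ i) i) := by
  constructor
  · -- hyperplane → two optimal permutations
    rintro ⟨a, ⟨i0, hi0⟩, hcol⟩
    simp only [tropHyperplane, Set.mem_setOf_eq] at hcol
    choose i1 i2 hne12 heq12 hmax using hcol
    have hNE : Nonempty (Fin n) := ⟨i0⟩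
    obtain ⟨σ0, hσ0⟩ := Finite.exists_max (fun ρ : Equiv.Perm (Fin n) => ∑ i, v (ρ i) i)
    set s := σ0.symm with hs
    -- the column maxima are finite
    have hμ : ∀ j, ∃ r : ℝ, a (i1 j) + ↑(v j (i1 j)) = ↑r := by
      intro j
      have hne : a (i1 j) + ↑(v j (i1 j)) ≠ ⊥ := by
        intro hbot
        have h := hmax j i0
        rw [hbot, le_bot_iff, WithBot.add_eq_bot] at h
        rcases h with h | h
        · exact hi0 h
        · exact WithBot.coe_ne_bot h
      obtain ⟨r, hr⟩ := WithBot.ne_bot_iff_exists.1 hne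
      exact ⟨r, hr.symm⟩
    choose μ hμ using hμ
    -- a tight row different from the one used by s
    set t : Fin n → Fin n := fun j => if i1 j = s j then i2 j else i1 j with ht
    have hts : ∀ j, t j ≠ s j := by
      intro j
      rw [ht]; dsimp only
      split_ifs with h
      · rw [← h]; exact (hne12 j).symm
      · exact h
    have htight : ∀ j, a (t j) + ↑(v j (t j)) = ↑(μ j) := by
      intro j
      rw [← hμ j, ht]; dsimp only
      split_ifs with h
      · exact (heq12 j).symm
      · rfl
    have hta : ∀ j, ∃ r : ℝ, a (t j) = ↑r := by
      intro j
      have hne : a (t j) ≠ ⊥ := by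
        intro hbot
        have := htight j
        rw [hbot] at this
        simp at this
      obtain ⟨r, hr⟩ := WithBot.ne_bot_iff_exists.1 hne
      exact ⟨r, hr.symm⟩
    choose α hα using hta
    have T1 : ∀ j, α j + v j (t j) = μ j := by
      intro j
      have h := htight j
      rw [hα j, ← WithBot.coe_add] at h
      exact_mod_cast h
    have T2 : ∀ j j', α j + v j' (t j) ≤ μ j' := by
      intro j j'
      have h := hmax j' (t j)
      rw [hμ j', hα j, ← WithBot.coe_add] at h
      exact_mod_cast h
    -- the exchange function on columns
    set f : Fin n → Fin n := fun j => s.symm (t j) with hf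
    have hsf : ∀ j, s (f j) = t j := fun j => s.apply_symm_apply (t j)
    have hfne : ∀ j, f j ≠ j := by
      intro j h
      apply hts j
      rw [← hsf j, h]
    -- find a periodic point of f
    obtain ⟨m1, m2, hm12, hmeq⟩ :=
      Fintype.exists_ne_map_eq_of_card_lt (fun m : Fin (n+1) => f^[(m : ℕ)] i0) (by simp)
    have hxper : ∃ (x : Fin n) (d : ℕ), 0 < d ∧ f^[d] x = x := by
      rcases lt_or_gt_of_ne (show (m1 : ℕ) ≠ (m2 : ℕ) from fun h => hm12 (Fin.ext h)) with h | h
      · refine ⟨f^[(m1 : ℕ)] i0, (m2 : ℕ) - m1, by omega, ?_⟩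
        rw [← Function.iterate_add_apply, show (m2 : ℕ) - m1 + m1 = m2 from by omega]
        exact hmeq.symm
      · refine ⟨f^[(m2 : ℕ)] i0, (m1 : ℕ) - m2, by omega, ?_⟩
        rw [← Function.iterate_add_apply, show (m1 : ℕ) - m2 + m2 = m1 from by omega]
        exact hmeq
    obtain ⟨x, d, hd, hxd⟩ := hxper
    -- the orbit of x
    set O : Finset (Fin n) := (Finset.range d).image (fun m => f^[m] x) with hO
    have hxO : x ∈ O := mem_image.2 ⟨0, mem_range.2 hd, rfl⟩
    have hfO : ∀ j ∈ O, f j ∈ O := by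
      intro j hj
      obtain ⟨m, hm, rfl⟩ := mem_image.1 hj
      rw [mem_range] at hm
      rcases eq_or_lt_of_le (Nat.succ_le_of_lt hm) with h | h
      · refine mem_image.2 ⟨0, mem_range.2 hd, ?_⟩
        rw [← Function.iterate_succ_apply' f m x, h, hxd]
        rfl
      · exact mem_image.2 ⟨m + 1, mem_range.2 h, Function.iterate_succ_apply' f m x⟩
    have hiterO : ∀ (k : ℕ), ∀ j ∈ O, f^[k] j ∈ O := by
      intro k
      induction k with
      | zero => intro j hj; exact hj
      | succ k ih =>
        intro j hj
        rw [Function.iterate_succ_apply']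
        exact hfO _ (ih j hj)
    have hfd : ∀ j ∈ O, f^[d] j = j := by
      intro j hj
      obtain ⟨m, _, rfl⟩ := mem_image.1 hj
      rw [← Function.iterate_add_apply, Nat.add_comm, Function.iterate_add_apply, hxd]
    set g : Fin n → Fin n := f^[d - 1] with hg
    have hfg : ∀ j ∈ O, f (g j) = j := by
      intro j hj
      calc f (g j) = f^[d - 1 + 1] j := (Function.iterate_succ_apply' f (d - 1) j).symm
        _ = f^[d] j := by rw [show d - 1 + 1 = d from by omega]
        _ = j := hfd j hj
    have hgf : ∀ j ∈ O, g (f j) = j := by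
      intro j hj
      calc g (f j) = f^[d - 1 + 1] j := (Function.iterate_succ_apply f (d - 1) j).symm
        _ = f^[d] j := by rw [show d - 1 + 1 = d from by omega]
        _ = j := hfd j hj
    have hgO : ∀ j ∈ O, g j ∈ O := fun j hj => hiterO _ j hj
    -- build the permutation e : identity off O, f on O
    set e : Equiv.Perm (Fin n) :=
      { toFun := fun j => if j ∈ O then f j else j,
        invFun := fun j => if j ∈ O then g j else j,
        left_inv := by
          intro j
          by_cases hj : j ∈ O
          · simp only [if_pos hj, if_pos (hfO j hj)]
            exact hgf j hj
          · simp only [if_neg hj] 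
        right_inv := by
          intro j
          by_cases hj : j ∈ O
          · simp only [if_pos hj, if_pos (hgO j hj)]
            exact hfg j hj
          · simp only [if_neg hj] } with he
    have heapp : ∀ j, e j = if j ∈ O then f j else j := fun j => rfl
    have heO : ∀ j ∈ O, e j = f j := fun j hj => by rw [heapp, if_pos hj]
    have hesupp : {j | e j ≠ j} ⊆ ↑O := by
      intro j hj
      by_contra hjO
      apply hj
      rw [heapp, if_neg (fun h => hjO (Finset.mem_coe.2 h))]
    have hsum1 : ∀ (F : Fin n → ℝ), ∑ j ∈ O, F (f j) = ∑ j ∈ O, F j := by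
      intro F
      rw [← Equiv.Perm.sum_comp e O F hesupp]
      exact Finset.sum_congr rfl fun j hj => by rw [heO j hj]
    have step1 : ∑ j ∈ O, v j (s j) = ∑ j ∈ O, v (f j) (t j) := by
      rw [← hsum1 (fun j => v j (s j))]
      exact Finset.sum_congr rfl fun j hj => by rw [hsf j]
    have step2 : ∑ j ∈ O, v (f j) (t j) ≤ ∑ j ∈ O, (μ (f j) - α j) :=
      Finset.sum_le_sum fun j _ => by have := T2 j (f j); linarith
    have step3 : ∑ j ∈ O, (μ (f j) - α j) = ∑ j ∈ O, (μ j - α j) := by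
      rw [Finset.sum_sub_distrib, Finset.sum_sub_distrib, hsum1 μ]
    have step4 : ∑ j ∈ O, (μ j - α j) = ∑ j ∈ O, v j (t j) :=
      Finset.sum_congr rfl fun j _ => by have := T1 j; linarith
    set τ : Equiv.Perm (Fin n) := e.trans s with hτdef
    have hτ : ∀ j, τ j = if j ∈ O then t j else s j := by
      intro j
      rw [hτdef, Equiv.trans_apply, heapp]
      by_cases hj : j ∈ O
      · rw [if_pos hj, if_pos hj, hsf]
      · rw [if_neg hj, if_neg hj]
    have hWτ : ∑ j, v j (s j) ≤ ∑ j, v j (τ j) := by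
      rw [← Finset.sum_add_sum_compl O (fun j => v j (τ j)),
          ← Finset.sum_add_sum_compl O (fun j => v j (s j))]
      have h1 : ∑ j ∈ O, v j (τ j) = ∑ j ∈ O, v j (t j) :=
        Finset.sum_congr rfl fun j hj => by rw [hτ j, if_pos hj]
      have h2 : ∑ j ∈ Oᶜ, v j (τ j) = ∑ j ∈ Oᶜ, v j (s j) :=
        Finset.sum_congr rfl fun j hj => by rw [hτ j, if_neg (Finset.mem_compl.1 hj)]
      have := step1
      linarith [step2, step3, step4]
    refine ⟨σ0, τ.symm, ?_, hσ0, ?_⟩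
    · intro h
      have hse : s = τ := by rw [hs, h, Equiv.symm_symm]
      have : s x = τ x := by rw [hse]
      rw [hτ x, if_pos hxO] at this
      exact hts x this.symm
    · have hle : ∑ i, v (τ.symm i) i ≤ ∑ i, v (σ0 i) i := hσ0 τ.symm
      have h1 : ∑ i, v (τ.symm i) i = ∑ j, v j (τ j) := by
        rw [sum_perm_symm v τ.symm, Equiv.symm_symm]
      have h2 : ∑ i, v (σ0 i) i = ∑ j, v j (s j) := sum_perm_symm v σ0
      rw [h1, h2]
      rw [h1, h2] at hle
      exact le_antisymm hle hWτ
  · -- two optimal permutations → hyperplane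
    rintro ⟨σ, π, hne, hopt, heq⟩
    have hsp : ∃ j0, σ.symm j0 ≠ π.symm j0 := by
      by_contra h
      push_neg at h
      apply hne
      have : σ.symm = π.symm := Equiv.ext h
      rw [← Equiv.symm_symm σ, this, Equiv.symm_symm]
    obtain ⟨j0, hj0⟩ := hsp
    set M : ℝ := ∑ j, v j (σ.symm j) with hM
    have hopt' : ∀ τ : Equiv.Perm (Fin n), ∑ j, v j (τ j) ≤ M := by
      intro τ
      have h := hopt τ.symm
      rw [sum_perm_symm v τ.symm, Equiv.symm_symm, sum_perm_symm v σ] at h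
      exact h
    have heq' : ∑ j, v j (π.symm j) = M := by
      rw [hM, ← sum_perm_symm v π, ← sum_perm_symm v σ]
      exact heq
    have hPne : ∀ i : Fin n,
        ((univ.filter (fun τ : Equiv.Perm (Fin n) => τ j0 = i)).image
          (fun τ => ∑ j ∈ univ.erase j0, v j (τ j))).Nonempty :=
      fun i => Finset.image_nonempty.2
        ⟨Equiv.swap j0 i, Finset.mem_filter.2 ⟨mem_univ _, Equiv.swap_apply_left _ _⟩⟩
    set D : Fin n → ℝ := fun i => Finset.max' _ (hPne i) with hD
    have hD1 : ∀ (τ : Equiv.Perm (Fin n)), ∑ j ∈ univ.erase j0, v j (τ j) ≤ D (τ j0) := by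
      intro τ
      apply Finset.le_max'
      exact Finset.mem_image.2 ⟨τ, Finset.mem_filter.2 ⟨mem_univ _, rfl⟩, rfl⟩
    have hD2 : ∀ i, ∃ τ : Equiv.Perm (Fin n), τ j0 = i ∧ D i = ∑ j ∈ univ.erase j0, v j (τ j) := by
      intro i
      have h := Finset.max'_mem _ (hPne i)
      rw [Finset.mem_image] at h
      obtain ⟨τ, hτ, hval⟩ := h
      exact ⟨τ, (Finset.mem_filter.1 hτ).2, hval.symm⟩
    have hsplit : ∀ (τ : Equiv.Perm (Fin n)),
        ∑ j ∈ univ.erase j0, v j (τ j) + v j0 (τ j0) = ∑ j, v j (τ j) :=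
      fun τ => Finset.sum_erase_add _ _ (mem_univ j0)
    have hDle : ∀ l, D l + v j0 l ≤ M := by
      intro l
      obtain ⟨τ, hτ0, hτv⟩ := hD2 l
      rw [hτv, ← hτ0, hsplit τ]
      exact hopt' τ
    have hDs : D (σ.symm j0) + v j0 (σ.symm j0) = M := by
      refine le_antisymm (hDle _) ?_
      have h1 := hD1 σ.symm
      have h2 := hsplit σ.symm
      rw [← hM] at h2
      linarith
    have hDp : D (π.symm j0) + v j0 (π.symm j0) = M := by
      refine le_antisymm (hDle _) ?_
      have h1 := hD1 π.symm
      have h2 := hsplit π.symm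
      rw [heq'] at h2
      linarith
    refine ⟨fun i => ((D i : ℝ) : WithBot ℝ), ⟨j0, WithBot.coe_ne_bot⟩, ?_⟩
    intro j
    simp only [tropHyperplane, Set.mem_setOf_eq]
    by_cases hj : j = j0
    · subst hj
      refine ⟨σ.symm j, π.symm j, hj0, ?_, ?_⟩
      · rw [← WithBot.coe_add, ← WithBot.coe_add, hDs, hDp]
      · intro l
        rw [← WithBot.coe_add, ← WithBot.coe_add, hDs]
        exact_mod_cast hDle l
    · have hNE : Nonempty (Fin n) := ⟨j0⟩
      obtain ⟨lstar, hlstar⟩ := Finite.exists_max (fun l => D l + v j l)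
      obtain ⟨τs, hτ0, hτv⟩ := hD2 lstar
      set l' : Fin n := τs j with hl'
      have hne' : lstar ≠ l' := by
        rw [hl', ← hτ0]
        intro h
        exact hj (τs.injective h.symm)
      have hmemj : j ∈ univ.erase j0 := Finset.mem_erase.2 ⟨hj, mem_univ _⟩
      have key : D lstar + v j lstar ≤ D l' + v j l' := by
        set τ'' : Equiv.Perm (Fin n) := (Equiv.swap j0 j).trans τs with hτ''def
        have hτ''0 : τ'' j0 = l' := by
          rw [hτ''def, Equiv.trans_apply, Equiv.swap_apply_left, hl']
        have h1 : ∑ j' ∈ univ.erase j0, v j' (τ'' j') ≤ D l' := by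
          rw [← hτ''0]; exact hD1 τ''
        have e1 : ∑ j' ∈ (univ.erase j0).erase j, v j' (τ'' j') + v j (τ'' j)
            = ∑ j' ∈ univ.erase j0, v j' (τ'' j') := Finset.sum_erase_add _ _ hmemj
        have e2 : ∑ j' ∈ (univ.erase j0).erase j, v j' (τs j') + v j (τs j)
            = ∑ j' ∈ univ.erase j0, v j' (τs j') := Finset.sum_erase_add _ _ hmemj
        have e3 : ∑ j' ∈ (univ.erase j0).erase j, v j' (τ'' j')
            = ∑ j' ∈ (univ.erase j0).erase j, v j' (τs j') := by
          refine Finset.sum_congr rfl fun x hx => ?_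
          have hxj : x ≠ j := (Finset.mem_erase.1 hx).1
          have hxj0 : x ≠ j0 := (Finset.mem_erase.1 ((Finset.mem_erase.1 hx).2)).1
          rw [hτ''def, Equiv.trans_apply, Equiv.swap_apply_of_ne_of_ne hxj0 hxj]
        have e4 : v j (τ'' j) = v j lstar := by
          rw [hτ''def, Equiv.trans_apply, Equiv.swap_apply_right, hτ0]
        have hvl' : v j (τs j) = v j l' := by rw [hl']
        linarith [h1, e1, e2, e3, e4, hτv, hvl']
      have keyeq : D l' + v j l' = D lstar + v j lstar :=
        le_antisymm (hlstar l') key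
      refine ⟨lstar, l', hne', ?_, ?_⟩
      · rw [← WithBot.coe_add, ← WithBot.coe_add]
        exact_mod_cast keyeq.symm
      · intro l
        rw [← WithBot.coe_add, ← WithBot.coe_add]
        exact_mod_cast hlstar l
end

section
/- Let R be an idempotent semiring and let A ∈ M_n(R) be a matrix with A_{11} = ⋯ = A_{nn} = 1 and per A = 1, where per A = Σ_{σ∈S_n} A_{1σ(1)}⋯A_{nσ(n)} is the permanent. Then every circuit of A has weight less than or equal to 1 (for every sequence i_0,…,i_k in [n] with k ≥ 1 and i_k = i_0, the product A_{i_0 i_1}⋯A_{i_{k-1} i_k} ≤ 1 in the natural order), and the adjugate of A equals its Kleene star: A^adj = A* := I + A + ⋯ + A^{n-1}, where (A^adj)_{ij} := per A(j,i) and A(j,i) is the (n-1)×(n-1) submatrix of A obtained by deleting row j and column i. -/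
open Finset

/-- The permanent of a matrix over a commutative semiring. -/
def perm {R : Type*} [CommSemiring R] {n : ℕ} (A : Matrix (Fin n) (Fin n) R) : R :=
  ∑ σ : Equiv.Perm (Fin n), ∏ i, A i (σ i)


open Finset

section Aux
variable {R : Type*} [CommSemiring R]

theorem yle_trans {a b c : R} (h1 : a + b = b) (h2 : b + c = c) : a + c = c := by
  rw [← h2, ← add_assoc, h1]

theorem yle_add_left (hidem : ∀ a : R, a + a = a) (a b : R) : a + (a + b) = a + b := by
  rw [← add_assoc, hidem]

theorem yle_add_right (hidem : ∀ a : R, a + a = a) (a b : R) : b + (a + b) = a + b := by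
  rw [add_comm a b, ← add_assoc, hidem]

theorem yadd_le (hidem : ∀ a : R, a + a = a) {a b c : R} (h1 : a + c = c) (h2 : b + c = c) :
    (a + b) + c = c := by
  rw [add_assoc, h2, h1]

theorem ysum_le (hidem : ∀ a : R, a + a = a) {ι : Type*} [DecidableEq ι] {s : Finset ι} {f : ι → R} {c : R}
    (h : ∀ x ∈ s, f x + c = c) : (∑ x ∈ s, f x) + c = c := by
  induction s using Finset.induction_on with
  | empty => simp
  | @insert a s hx ih =>
    rw [Finset.sum_insert hx]
    exact yadd_le hidem (h a (Finset.mem_insert_self a s))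
      (ih fun x hxs => h x (Finset.mem_insert_of_mem hxs))

theorem yle_sum (hidem : ∀ a : R, a + a = a) {ι : Type*} [DecidableEq ι] {s : Finset ι} {f : ι → R} {x : ι}
    (hx : x ∈ s) : f x + ∑ y ∈ s, f y = ∑ y ∈ s, f y := by
  rw [← Finset.add_sum_erase s f hx, ← add_assoc, hidem]

theorem ymul_le_mul (hidem : ∀ a : R, a + a = a) {a b c d : R} (h1 : a + b = b)
    (h2 : c + d = d) : a * c + b * d = b * d := by
  have : b * d = (a + b) * (c + d) := by rw [h1, h2]
  rw [this, add_mul, mul_add, mul_add]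
  calc a * c + (a * c + a * d + (b * c + b * d))
      = (a * c + a * c) + (a * d + (b * c + b * d)) := by ring
    _ = a * c + a * d + (b * c + b * d) := by rw [hidem, add_assoc]

theorem ymul_le_one (hidem : ∀ a : R, a + a = a) {a b : R} (h1 : a + 1 = 1) (h2 : b + 1 = 1) :
    a * b + 1 = 1 := by
  have := ymul_le_mul hidem h1 h2
  rwa [mul_one] at this

theorem ymul_le_left (hidem : ∀ a : R, a + a = a) {a b : R} (h1 : a + 1 = 1) (c : R) :
    a * c + c = c := by
  have := ymul_le_mul hidem h1 (hidem c)
  rwa [one_mul] at this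

theorem yle_antisymm {a b : R} (h1 : a + b = b) (h2 : b + a = a) : a = b := by
  rw [← h2, add_comm, h1]

end Aux

section Paths
variable {R : Type*} [CommSemiring R] {n : ℕ}

/-- product of edge weights along a path -/
def pathProd (A : Matrix (Fin (n + 1)) (Fin (n + 1)) R) (p : ℕ → Fin (n + 1)) (k : ℕ) : R :=
  ∏ t ∈ Finset.range k, A (p t) (p (t + 1))

theorem pathProd_congr {A : Matrix (Fin (n + 1)) (Fin (n + 1)) R} {p q : ℕ → Fin (n + 1)}
    {k : ℕ} (h : ∀ t ≤ k, p t = q t) : pathProd A p k = pathProd A q k := by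
  refine Finset.prod_congr rfl fun t ht => ?_
  rw [Finset.mem_range] at ht
  rw [h t (le_of_lt ht), h (t + 1) ht]

theorem pathProd_succ (A : Matrix (Fin (n + 1)) (Fin (n + 1)) R) (p : ℕ → Fin (n + 1)) (k : ℕ) :
    pathProd A p (k + 1) = pathProd A p k * A (p k) (p (k + 1)) :=
  Finset.prod_range_succ _ _

theorem pathProd_le_pow (hidem : ∀ a : R, a + a = a) (A : Matrix (Fin (n + 1)) (Fin (n + 1)) R)
    (p : ℕ → Fin (n + 1)) (k : ℕ) :
    pathProd A p k + (A ^ k) (p 0) (p k) = (A ^ k) (p 0) (p k) := by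
  induction k with
  | zero => simp [pathProd, Matrix.one_apply, hidem]
  | succ k ih =>
    rw [pathProd_succ, pow_succ, Matrix.mul_apply]
    exact yle_trans (ymul_le_mul hidem ih (hidem _)) (yle_sum hidem (f := fun x => (A ^ k) (p 0) x * A x (p (k + 1))) (Finset.mem_univ (p k)))

theorem pathProd_splice (A : Matrix (Fin (n + 1)) (Fin (n + 1)) R) (p : ℕ → Fin (n + 1))
    {a b k : ℕ} (hab : a < b) (hbk : b ≤ k) (hpab : p a = p b) :
    pathProd A p k =
      pathProd A (fun t => if t < a then p t else p (t + (b - a))) (k - (b - a)) *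
        pathProd A (fun t => p (a + t)) (b - a) := by
  set d := b - a with hd
  set q : ℕ → Fin (n + 1) := fun t => if t < a then p t else p (t + d) with hq
  have had : a + d = b := by omega
  have h1 : pathProd A p k
      = (∏ t ∈ Finset.range a, A (p t) (p (t + 1)))
        * (∏ t ∈ Finset.Ico a b, A (p t) (p (t + 1)))
        * (∏ t ∈ Finset.Ico b k, A (p t) (p (t + 1))) := by
    rw [pathProd, Finset.range_eq_Ico, ← Finset.prod_Ico_consecutive _ (Nat.zero_le b) hbk,
      ← Finset.prod_Ico_consecutive _ (Nat.zero_le a) (le_of_lt hab), ← Finset.range_eq_Ico]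
  have h2 : pathProd A q (k - d)
      = (∏ t ∈ Finset.range a, A (p t) (p (t + 1)))
        * (∏ t ∈ Finset.Ico b k, A (p t) (p (t + 1))) := by
    have hak : a ≤ k - d := by omega
    rw [pathProd, Finset.range_eq_Ico, ← Finset.prod_Ico_consecutive _ (Nat.zero_le a) hak,
      ← Finset.range_eq_Ico]
    congr 1
    · refine Finset.prod_congr rfl fun t ht => ?_
      rw [Finset.mem_range] at ht
      have hqt : q t = p t := if_pos ht
      have hqt1 : q (t + 1) = p (t + 1) := by
        rcases lt_or_eq_of_le (Nat.succ_le_of_lt ht) with h | h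
        · exact if_pos h
        · have ht1 : t + 1 + d = b := by omega
          simp only [hq]
          rw [if_neg (by omega), ht1, ← hpab]
          congr 1
          omega
      rw [hqt, hqt1]
    · rw [Finset.prod_Ico_eq_prod_range, Finset.prod_Ico_eq_prod_range]
      have : k - d - a = k - b := by omega
      rw [this]
      refine Finset.prod_congr rfl fun t ht => ?_
      have h1 : q (a + t) = p (b + t) := by
        rw [hq]; simp only
        rw [if_neg (by omega)]
        congr 1; omega
      have h2 : q (a + t + 1) = p (b + t + 1) := by
        rw [hq]; simp only
        rw [if_neg (by omega)]
        congr 1; omega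
      rw [h1, h2]
  have h3 : pathProd A (fun t => p (a + t)) d
      = ∏ t ∈ Finset.Ico a b, A (p t) (p (t + 1)) := by
    rw [pathProd, Finset.prod_Ico_eq_prod_range]
    exact Finset.prod_congr rfl fun t ht => rfl
  rw [h1, h2, h3]
  ring

end Paths

section Circuits
variable {R : Type*} [CommSemiring R] {n : ℕ}

theorem permTerm_le_one (hidem : ∀ a : R, a + a = a) {A : Matrix (Fin (n + 1)) (Fin (n + 1)) R}
    (hper : perm A = 1) (σ : Equiv.Perm (Fin (n + 1))) :
    (∏ r, A r (σ r)) + 1 = 1 := by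
  rw [← hper, perm]
  exact yle_sum hidem (f := fun τ : Equiv.Perm (Fin (n + 1)) => ∏ i, A i (τ i))
    (Finset.mem_univ σ)

theorem circuit_le_one (hidem : ∀ a : R, a + a = a) {A : Matrix (Fin (n + 1)) (Fin (n + 1)) R}
    (hdiag : ∀ i, A i i = 1) (hper : perm A = 1) (k : ℕ) :
    ∀ p : ℕ → Fin (n + 1), 0 < k → p k = p 0 → pathProd A p k + 1 = 1 := by
  induction k using Nat.strong_induction_on with
  | _ k IH =>
    intro p hk hpk
    by_cases hinj : ∀ s < k, ∀ t < k, p s = p t → s = t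
    · -- the circuit is simple: build the cyclic permutation
      set l : List (Fin (n + 1)) := (List.range k).map p with hl
      have hlen : l.length = k := by simp [hl]
      have hget : ∀ (t : ℕ) (ht : t < k), l[t]'(by omega) = p t := by
        intro t ht
        simp [hl]
      have hnd : l.Nodup := by
        rw [hl]
        refine List.Nodup.map_on ?_ (List.nodup_range (n := k))
        intro s hs t ht hst
        rw [List.mem_range] at hs ht
        exact hinj s hs t ht hst
      set σ := l.formPerm with hσ
      have hσp : ∀ t < k, σ (p t) = p (t + 1) := by
        intro t ht
        have h1 : σ (l[t]'(by omega)) = l[(t + 1) % l.length]'(by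
            exact Nat.mod_lt _ (by omega)) := List.formPerm_apply_getElem l hnd t (by omega)
        rw [hget t ht] at h1
        rw [h1]
        rcases Nat.lt_or_ge (t + 1) k with h | h
        · have hmod : (t + 1) % l.length = t + 1 := by rw [hlen]; exact Nat.mod_eq_of_lt h
          simp_rw [hmod]
          exact hget (t + 1) h
        · have ht1 : t + 1 = k := by omega
          have : (t + 1) % l.length = 0 := by rw [hlen, ht1, Nat.mod_self]
          simp_rw [this]
          rw [hget 0 hk, ← hpk, ht1]
      have himg : l.toFinset = (Finset.range k).image p := by
        ext r
        simp [hl, List.mem_map, List.mem_range]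
      have hsplit : (∏ r, A r (σ r)) = pathProd A p k := by
        rw [← Finset.prod_mul_prod_compl l.toFinset (fun r => A r (σ r))]
        have hc : ∏ r ∈ l.toFinsetᶜ, A r (σ r) = 1 := by
          refine Finset.prod_eq_one fun r hr => ?_
          rw [Finset.mem_compl, List.mem_toFinset] at hr
          rw [List.formPerm_apply_of_notMem hr, hdiag]
        rw [hc, mul_one, himg, Finset.prod_image (fun s hs t ht hst =>
          hinj s (Finset.mem_range.mp hs) t (Finset.mem_range.mp ht) hst)]
        exact Finset.prod_congr rfl fun t ht => by
          rw [hσp t (Finset.mem_range.mp ht)]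
      rw [← hsplit]
      exact permTerm_le_one hidem hper σ
    · push_neg at hinj
      obtain ⟨s, hs, t, ht, hpst, hst⟩ := hinj
      set a := min s t with ha
      set b := max s t with hb
      have hab : a < b := by omega
      have hbk : b ≤ k := by omega
      have hpab : p a = p b := by
        rcases le_total s t with h | h
        · rw [ha, hb, min_eq_left h, max_eq_right h]; exact hpst
        · rw [ha, hb, min_eq_right h, max_eq_left h]; exact hpst.symm
      rw [pathProd_splice A p hab hbk hpab]
      have hd : 0 < b - a := by omega
      refine ymul_le_one hidem ?_ ?_
      · refine IH (k - (b - a)) (by omega) _ (by omega) ?_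
        have h1 : ¬ (k - (b - a) < a) := by omega
        simp only [h1, if_false]
        have h2 : k - (b - a) + (b - a) = k := by omega
        rw [h2]
        rcases Nat.eq_zero_or_pos a with h | h
        · rw [if_neg (by omega)]
          rw [hpk]
          rw [h] at hpab ⊢
          rw [hpab]
          congr 1
          omega
        · rw [if_pos h, hpk]
      · refine IH (b - a) (by omega) _ hd ?_
        simp only [Nat.add_zero]
        have : a + (b - a) = b := by omega
        rw [this, hpab]

end Circuits

section DirA
variable {R : Type*} [CommSemiring R] {n : ℕ}

theorem pathProd_le_pow_pad (hidem : ∀ a : R, a + a = a)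
    {A : Matrix (Fin (n + 1)) (Fin (n + 1)) R} (hdiag : ∀ i, A i i = 1)
    (p : ℕ → Fin (n + 1)) {k : ℕ} (hkn : k ≤ n) :
    pathProd A p k + (A ^ n) (p 0) (p k) = (A ^ n) (p 0) (p k) := by
  set q : ℕ → Fin (n + 1) := fun t => p (min t k) with hq
  have h1 : pathProd A q n = pathProd A p k := by
    rw [pathProd, pathProd, Finset.range_eq_Ico, ← Finset.prod_Ico_consecutive _ (Nat.zero_le k) hkn,
      ← Finset.range_eq_Ico]
    have h2 : ∏ t ∈ Finset.Ico k n, A (q t) (q (t + 1)) = 1 := by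
      refine Finset.prod_eq_one fun t ht => ?_
      rw [Finset.mem_Ico] at ht
      have e1 : q t = p k := by rw [hq]; simp only; rw [min_eq_right ht.1]
      have e2 : q (t + 1) = p k := by rw [hq]; simp only; rw [min_eq_right (by omega)]
      rw [e1, e2, hdiag]
    rw [h2, mul_one]
    refine Finset.prod_congr rfl fun t ht => ?_
    rw [Finset.mem_range] at ht
    have e1 : q t = p t := by rw [hq]; simp only; rw [min_eq_left (le_of_lt ht)]
    have e2 : q (t + 1) = p (t + 1) := by rw [hq]; simp only; rw [min_eq_left ht]
    rw [e1, e2]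
  have h3 := pathProd_le_pow hidem A q n
  rw [h1] at h3
  have e0 : q 0 = p 0 := by rw [hq]; simp
  have en : q n = p k := by rw [hq]; simp only; rw [min_eq_right hkn]
  rwa [e0, en] at h3

theorem invariant_prod_le_one (hidem : ∀ a : R, a + a = a)
    {A : Matrix (Fin (n + 1)) (Fin (n + 1)) R} (hdiag : ∀ i, A i i = 1) (hper : perm A = 1)
    (σ : Equiv.Perm (Fin (n + 1))) (P : Fin (n + 1) → Prop) [DecidablePred P]
    (hP : ∀ r, P r → P (σ r)) :
    (∏ r ∈ Finset.univ.filter P, A r (σ r)) + 1 = 1 := by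
  set f : Fin (n + 1) → Fin (n + 1) := fun r => if P r then σ r else r with hf
  have hinj : Function.Injective f := by
    intro x y hxy
    by_cases hx : P x <;> by_cases hy : P y <;> simp only [hf, hx, hy, if_pos, if_neg,
      if_true, if_false] at hxy
    · exact σ.injective hxy
    · exact absurd (hxy ▸ hP x hx) hy
    · exact absurd (hxy.symm ▸ hP y hy) hx
    · exact hxy
  set σ' : Equiv.Perm (Fin (n + 1)) := Equiv.ofBijective f
    ((Finite.injective_iff_bijective).mp hinj) with hσ'
  have hterm := permTerm_le_one hidem hper σ'
  have hsplit : (∏ r, A r (σ' r))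
      = (∏ r ∈ Finset.univ.filter P, A r (σ r)) * ∏ r ∈ Finset.univ.filter (fun r => ¬ P r),
        A r (σ' r) := by
    rw [← Finset.prod_filter_mul_prod_filter_not Finset.univ P]
    congr 1
    refine Finset.prod_congr rfl fun r hr => ?_
    rw [Finset.mem_filter] at hr
    have : σ' r = σ r := by
      show f r = σ r
      rw [hf]; simp only; rw [if_pos hr.2]
    rw [this]
  have hone : ∏ r ∈ Finset.univ.filter (fun r => ¬ P r), A r (σ' r) = 1 := by
    refine Finset.prod_eq_one fun r hr => ?_
    rw [Finset.mem_filter] at hr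
    have : σ' r = r := by
      show f r = r
      rw [hf]; simp only; rw [if_neg hr.2]
    rw [this, hdiag]
  rw [hsplit, hone, mul_one] at hterm
  exact hterm

end DirA

section DirA2
variable {R : Type*} [CommSemiring R] {n : ℕ}

open Equiv Function

theorem cycle_term_le_pow (hidem : ∀ a : R, a + a = a)
    {A : Matrix (Fin (n + 1)) (Fin (n + 1)) R} (hdiag : ∀ i, A i i = 1) (hper : perm A = 1)
    (σ : Equiv.Perm (Fin (n + 1))) (i j : Fin (n + 1)) (hσj : σ j = i) :
    (∏ r ∈ Finset.univ.erase j, A r (σ r)) + (A ^ n) i j = (A ^ n) i j := by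
  classical
  set m := Function.minimalPeriod (⇑σ) j with hm
  have hjp : j ∈ Function.periodicPts (⇑σ) := by
    refine Function.mk_mem_periodicPts (orderOf_pos σ) ?_
    show (⇑σ)^[orderOf σ] j = j
    rw [Equiv.Perm.iterate_eq_pow, pow_orderOf_eq_one]
    rfl
  have hm0 : 0 < m := Function.minimalPeriod_pos_of_mem_periodicPts hjp
  have hmj : (⇑σ)^[m] j = j := Function.iterate_minimalPeriod
  set q : ℕ → Fin (n + 1) := fun t => (⇑σ)^[t + 1] j with hq
  -- split the product into the cycle of j and the rest
  rw [← Finset.prod_filter_mul_prod_filter_not (Finset.univ.erase j) (σ.SameCycle j)]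
  -- the non-cycle part is ≤ 1
  have hD : ((Finset.univ.erase j).filter (fun r => ¬ σ.SameCycle j r))
      = Finset.univ.filter (fun r => ¬ σ.SameCycle j r) := by
    ext r
    simp only [Finset.mem_filter, Finset.mem_erase, Finset.mem_univ, true_and, and_true]
    constructor
    · rintro ⟨_, h⟩; exact h
    · intro h; exact ⟨fun hrj => h (hrj ▸ Equiv.Perm.SameCycle.refl σ j), h⟩
  have hDle : (∏ r ∈ (Finset.univ.erase j).filter (fun r => ¬ σ.SameCycle j r), A r (σ r))
      + 1 = 1 := by
    rw [hD]
    exact invariant_prod_le_one hidem hdiag hper σ _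
      (fun r hr hsc => hr (Equiv.Perm.sameCycle_apply_right.mp hsc))
  -- the cycle part is the path i → j
  have hC : ((Finset.univ.erase j).filter (fun r => σ.SameCycle j r))
      = (Finset.Ico 1 m).image (fun t => (⇑σ)^[t] j) := by
    ext r
    simp only [Finset.mem_filter, Finset.mem_erase, Finset.mem_univ, true_and, and_true,
      Finset.mem_image, Finset.mem_Ico]
    constructor
    · rintro ⟨hrj, hsc⟩
      obtain ⟨t, _, htr⟩ := hsc.exists_pow_eq'
      have htr' : (⇑σ)^[t] j = r := by rw [Equiv.Perm.iterate_eq_pow]; exact htr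
      refine ⟨t % m, ⟨?_, Nat.mod_lt _ hm0⟩, by rw [Function.iterate_mod_minimalPeriod_eq, htr']⟩
      rcases Nat.eq_zero_or_pos (t % m) with h0 | h0
      · exfalso
        apply hrj
        rw [← htr', ← Function.iterate_mod_minimalPeriod_eq, h0]
        simp
      · exact h0
    · rintro ⟨t, ⟨ht1, htm⟩, rfl⟩
      constructor
      · intro hEq
        exact Function.not_isPeriodicPt_of_pos_of_lt_minimalPeriod (by omega) htm hEq
      · exact ⟨(t : ℤ), by rw [zpow_natCast, ← Equiv.Perm.iterate_eq_pow]⟩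
  have hinj : Set.InjOn (fun t => (⇑σ)^[t] j) (Finset.Ico 1 m : Finset ℕ) := by
    intro s hs t ht hst
    rw [Finset.coe_Ico, Set.mem_Ico] at hs ht
    exact Function.iterate_injOn_Iio_minimalPeriod (Set.mem_Iio.mpr hs.2) (Set.mem_Iio.mpr ht.2) hst
  have hCprod : (∏ r ∈ (Finset.univ.erase j).filter (fun r => σ.SameCycle j r), A r (σ r))
      = pathProd A q (m - 1) := by
    rw [hC, Finset.prod_image hinj, Finset.prod_Ico_eq_prod_range, pathProd]
    have : m - 1 = m - 1 := rfl
    refine Finset.prod_congr rfl fun t ht => ?_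
    have e1 : (⇑σ)^[1 + t] j = q t := by rw [hq]; simp only; congr 1; omega
    have e2 : σ ((⇑σ)^[1 + t] j) = q (t + 1) := by
      rw [← Function.iterate_succ_apply' (⇑σ) (1 + t) j, hq]
      simp only
      congr 1
      omega
    rw [e2, e1]
  have hq0 : q 0 = i := by rw [hq]; simp only [Function.iterate_one, zero_add]; exact hσj
  have hqm : q (m - 1) = j := by
    rw [hq]; simp only
    have : m - 1 + 1 = m := by omega
    rw [this, hmj]
  have hmn : m - 1 ≤ n := by
    have hcard : ((Finset.range m).image (fun t => (⇑σ)^[t] j)).card = m := by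
      rw [Finset.card_image_of_injOn, Finset.card_range]
      intro s hs t ht hst
      rw [Finset.coe_range, Set.mem_Iio] at hs ht
      exact Function.iterate_injOn_Iio_minimalPeriod hs ht hst
    have := Finset.card_le_univ ((Finset.range m).image (fun t => (⇑σ)^[t] j))
    rw [hcard, Fintype.card_fin] at this
    omega
  have hpad := pathProd_le_pow_pad hidem hdiag q hmn
  rw [hq0, hqm] at hpad
  rw [hCprod]
  have := ymul_le_mul hidem hpad hDle
  rwa [mul_one] at this

end DirA2

section DirB
variable {R : Type*} [CommSemiring R] {n : ℕ}

open Equiv Function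

theorem succAbove_image (j : Fin (n + 1)) :
    (Finset.univ : Finset (Fin n)).image j.succAbove = Finset.univ.erase j := by
  ext r
  simp only [Finset.mem_image, Finset.mem_univ, true_and, Finset.mem_erase, and_true]
  constructor
  · rintro ⟨t, rfl⟩; exact Fin.succAbove_ne j t
  · intro h; exact Fin.exists_succAbove_eq h

/-- the adjugate-style entry -/
def adjE (A : Matrix (Fin (n + 1)) (Fin (n + 1)) R) (i j : Fin (n + 1)) : R :=
  perm (A.submatrix j.succAbove i.succAbove)

theorem adjE_le_pow (hidem : ∀ a : R, a + a = a)
    {A : Matrix (Fin (n + 1)) (Fin (n + 1)) R} (hdiag : ∀ i, A i i = 1) (hper : perm A = 1)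
    (i j : Fin (n + 1)) : adjE A i j + (A ^ n) i j = (A ^ n) i j := by
  rw [adjE, perm]
  refine ysum_le hidem fun τ _ => ?_
  set σ : Equiv.Perm (Fin (n + 1)) :=
    (finSuccEquiv' j).trans ((Equiv.optionCongr τ).trans (finSuccEquiv' i).symm) with hσ
  have hσj : σ j = i := by
    simp [hσ]
  have hσt : ∀ t : Fin n, σ (j.succAbove t) = i.succAbove (τ t) := by
    intro t
    simp [hσ, finSuccEquiv'_succAbove, finSuccEquiv'_symm_some]
  have hprod : (∏ t, A.submatrix j.succAbove i.succAbove t (τ t))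
      = ∏ r ∈ Finset.univ.erase j, A r (σ r) := by
    rw [← succAbove_image j, Finset.prod_image (fun s _ t _ h => Fin.succAbove_right_injective h)]
    refine Finset.prod_congr rfl fun t _ => ?_
    rw [Matrix.submatrix_apply, hσt]
  rw [hprod]
  exact cycle_term_le_pow hidem hdiag hper σ i j hσj

theorem pathProd_le_adjE (hidem : ∀ a : R, a + a = a)
    {A : Matrix (Fin (n + 1)) (Fin (n + 1)) R} (hdiag : ∀ i, A i i = 1) (hper : perm A = 1)
    (k : ℕ) : ∀ p : ℕ → Fin (n + 1),
      pathProd A p k + adjE A (p 0) (p k) = adjE A (p 0) (p k) := by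
  induction k using Nat.strong_induction_on with
  | _ k IH =>
    intro p
    by_cases hinj : ∀ s ≤ k, ∀ t ≤ k, p s = p t → s = t
    · -- simple path: build a permutation realizing it
      set l : List (Fin (n + 1)) := p k :: (List.range k).map p with hl
      have hlen : l.length = k + 1 := by simp [hl]
      have hget0 : l[0]'(by omega) = p k := rfl
      have hgets : ∀ (t : ℕ) (ht : t < k), l[t + 1]'(by omega) = p t := by
        intro t ht
        simp [hl]
      have hnd : l.Nodup := by
        rw [hl, List.nodup_cons]
        constructor
        · intro hmem
          obtain ⟨t, ht, hpt⟩ := List.mem_map.mp hmem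
          rw [List.mem_range] at ht
          exact absurd (hinj k le_rfl t (by omega) hpt.symm) (by omega)
        · refine List.Nodup.map_on ?_ (List.nodup_range (n := k))
          intro s hs t ht hst
          rw [List.mem_range] at hs ht
          exact hinj s (by omega) t (by omega) hst
      set σ := l.formPerm with hσ
      have hσp : ∀ t < k, σ (p t) = p (t + 1) := by
        intro t ht
        have h1 := List.formPerm_apply_getElem l hnd (t + 1) (by omega)
        rw [hgets t ht] at h1
        rw [h1]
        rcases Nat.lt_or_ge (t + 1) k with h | h
        · have hmod : (t + 1 + 1) % l.length = t + 2 := by rw [hlen]; exact Nat.mod_eq_of_lt (by omega)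
          simp_rw [hmod]
          exact hgets (t + 1) h
        · have ht1 : t + 1 = k := by omega
          have hmod : (t + 1 + 1) % l.length = 0 := by rw [hlen, ht1, Nat.mod_self]
          simp_rw [hmod]
          rw [hget0, ht1]
      have hσj : σ (p k) = p 0 := by
        have h1 := List.formPerm_apply_getElem l hnd 0 (by omega)
        rw [hget0] at h1
        rw [h1]
        rcases Nat.eq_zero_or_pos k with h | h
        · have hmod : (0 + 1) % l.length = 0 := by rw [hlen, h]
          simp_rw [hmod]
          rw [hget0, h]
        · have hmod : (0 + 1) % l.length = 1 := by rw [hlen]; exact Nat.mod_eq_of_lt (by omega)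
          simp_rw [hmod]
          exact hgets 0 h
      have hσout : ∀ r, r ∉ l → σ r = r := fun r hr => List.formPerm_apply_of_notMem hr
      -- build τ : Perm (Fin n)
      set i := p 0
      set j := p k
      set E : Option (Fin n) ≃ Option (Fin n) :=
        ((finSuccEquiv' j).symm.trans σ).trans (finSuccEquiv' i) with hE
      have hEnone : E none = none := by
        simp [hE, finSuccEquiv'_symm_none, hσj]
      set τ : Equiv.Perm (Fin n) := E.removeNone with hτ
      have hτs : ∀ t : Fin n, i.succAbove (τ t) = σ (j.succAbove t) := by
        intro t
        have hne : σ (j.succAbove t) ≠ i := by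
          intro hEq
          have : j.succAbove t = j := σ.injective (by rw [hEq, hσj])
          exact Fin.succAbove_ne j t this
        obtain ⟨z, hz⟩ := Fin.exists_succAbove_eq hne
        have hEt : E (some t) = some z := by
          simp only [hE, Equiv.trans_apply, finSuccEquiv'_symm_some, ← hz,
            finSuccEquiv'_succAbove]
        have hrs := Equiv.removeNone_some E ⟨z, hEt⟩
        rw [hEt] at hrs
        have hτt : τ t = z := Option.some_injective _ hrs
        rw [hτt, hz]
      have hterm : (∏ x, A.submatrix j.succAbove i.succAbove x (τ x)) = pathProd A p k := by
        have h1 : (∏ x, A.submatrix j.succAbove i.succAbove x (τ x))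
            = ∏ r ∈ Finset.univ.erase j, A r (σ r) := by
          rw [← succAbove_image j,
            Finset.prod_image (fun s _ t _ h => Fin.succAbove_right_injective h)]
          refine Finset.prod_congr rfl fun t _ => ?_
          rw [Matrix.submatrix_apply, hτs]
        have hsub : (Finset.range k).image p ⊆ Finset.univ.erase j := by
          intro r hr
          obtain ⟨t, ht, rfl⟩ := Finset.mem_image.mp hr
          rw [Finset.mem_range] at ht
          exact Finset.mem_erase.mpr ⟨fun hEq =>
            absurd (hinj t (le_of_lt ht) k le_rfl hEq) (by omega), Finset.mem_univ _⟩
        have h2 : ∏ r ∈ Finset.univ.erase j, A r (σ r)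
            = ∏ r ∈ (Finset.range k).image p, A r (σ r) := by
          refine (Finset.prod_subset hsub fun r hr hrs => ?_).symm
          have hrl : r ∉ l := by
            intro hmem
            rw [hl, List.mem_cons] at hmem
            rcases hmem with h | h
            · exact (Finset.mem_erase.mp hr).1 h
            · obtain ⟨t, ht, rfl⟩ := List.mem_map.mp h
              rw [List.mem_range] at ht
              exact hrs (Finset.mem_image.mpr ⟨t, Finset.mem_range.mpr ht, rfl⟩)
          rw [hσout r hrl, hdiag]
        have h3 : ∏ r ∈ (Finset.range k).image p, A r (σ r) = pathProd A p k := by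
          rw [Finset.prod_image (fun s hs t ht h => hinj s (le_of_lt (Finset.mem_range.mp hs))
            t (le_of_lt (Finset.mem_range.mp ht)) h)]
          exact Finset.prod_congr rfl fun t ht => by rw [hσp t (Finset.mem_range.mp ht)]
        rw [h1, h2, h3]
      rw [adjE, perm, ← hterm]
      exact yle_sum hidem
        (f := fun τ' : Equiv.Perm (Fin n) => ∏ x, A.submatrix j.succAbove i.succAbove x (τ' x))
        (Finset.mem_univ τ)
    · push_neg at hinj
      obtain ⟨s, hs, t, ht, hpst, hst⟩ := hinj
      set a := min s t with ha
      set b := max s t with hb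
      have hab : a < b := by omega
      have hbk : b ≤ k := by omega
      have hpab : p a = p b := by
        rcases le_total s t with h | h
        · rw [ha, hb, min_eq_left h, max_eq_right h]; exact hpst
        · rw [ha, hb, min_eq_right h, max_eq_left h]; exact hpst.symm
      rw [pathProd_splice A p hab hbk hpab]
      set q : ℕ → Fin (n + 1) := fun t => if t < a then p t else p (t + (b - a)) with hq
      have hq0 : q 0 = p 0 := by
        rcases Nat.eq_zero_or_pos a with h | h
        · rw [hq]; simp only
          rw [if_neg (by omega)]
          have hba : 0 + (b - a) = b := by omega
          rw [hba, ← hpab, h]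
        · rw [hq]; simp only; rw [if_pos h]
      have hqk : q (k - (b - a)) = p k := by
        rw [hq]; simp only
        rw [if_neg (by omega)]
        congr 1
        omega
      have hcyc : pathProd A (fun t => p (a + t)) (b - a) + 1 = 1 := by
        refine circuit_le_one hidem hdiag hper (b - a) _ (by omega) ?_
        simp only [Nat.add_zero]
        have : a + (b - a) = b := by omega
        rw [this, hpab]
      have hrest := IH (k - (b - a)) (by omega) q
      rw [hq0, hqk] at hrest
      have := ymul_le_mul hidem hrest hcyc
      rwa [mul_one] at this

end DirB

section Final
variable {R : Type*} [CommSemiring R] {n : ℕ}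

theorem pow_le_adjE (hidem : ∀ a : R, a + a = a)
    {A : Matrix (Fin (n + 1)) (Fin (n + 1)) R} (hdiag : ∀ i, A i i = 1) (hper : perm A = 1)
    (j : Fin (n + 1)) (k : ℕ) :
    ∀ (q : ℕ → Fin (n + 1)) (m : ℕ),
      pathProd A q m * (A ^ k) (q m) j + adjE A (q 0) j = adjE A (q 0) j := by
  induction k with
  | zero =>
    intro q m
    rw [pow_zero]
    by_cases h : q m = j
    · rw [h, Matrix.one_apply_eq, mul_one]
      have := pathProd_le_adjE hidem hdiag hper m q
      rwa [h] at this
    · rw [Matrix.one_apply_ne h, mul_zero, zero_add]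
  | succ k ih =>
    intro q m
    rw [pow_succ', Matrix.mul_apply, Finset.mul_sum]
    refine ysum_le hidem fun x _ => ?_
    set q' : ℕ → Fin (n + 1) := fun t => if t ≤ m then q t else x with hq'
    have hq'0 : q' 0 = q 0 := by rw [hq']; simp
    have hq'm1 : q' (m + 1) = x := by rw [hq']; simp
    have hpp : pathProd A q' (m + 1) = pathProd A q m * A (q m) x := by
      rw [pathProd_succ]
      congr 1
      · exact pathProd_congr fun t ht => by rw [hq']; simp only; rw [if_pos ht]
      · rw [hq']; simp only
        rw [if_pos le_rfl, if_neg (by omega)]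
    have := ih q' (m + 1)
    rw [hq'0, hq'm1, hpp] at this
    rw [← mul_assoc]
    exact this

theorem pow_entry_le_pow_n (hidem : ∀ a : R, a + a = a)
    {A : Matrix (Fin (n + 1)) (Fin (n + 1)) R} (hdiag : ∀ i, A i i = 1)
    (i j : Fin (n + 1)) {k : ℕ} (hk : k ≤ n) :
    (A ^ k) i j + (A ^ n) i j = (A ^ n) i j := by
  have hstep : ∀ m : ℕ, (A ^ m) i j + (A ^ (m + 1)) i j = (A ^ (m + 1)) i j := by
    intro m
    rw [pow_succ, Matrix.mul_apply]
    refine yle_trans ?_ (yle_sum hidem (f := fun x => (A ^ m) i x * A x j) (Finset.mem_univ j))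
    show (A ^ m) i j + (A ^ m) i j * A j j = (A ^ m) i j * A j j
    rw [hdiag, mul_one]
    exact hidem _
  have hchain : ∀ d m : ℕ, (A ^ m) i j + (A ^ (m + d)) i j = (A ^ (m + d)) i j := by
    intro d
    induction d with
    | zero => intro m; exact hidem _
    | succ d ihd =>
      intro m
      have h1 := hstep (m + d)
      have h2 := ihd m
      have := yle_trans h2 h1
      rwa [Nat.add_assoc] at this
  have := hchain (n - k) k
  rwa [Nat.add_sub_cancel' hk] at this

theorem list_prod_eq_pathProd {A : Matrix (Fin (n + 1)) (Fin (n + 1)) R}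
    (p : ℕ → Fin (n + 1)) (k : ℕ) :
    ((List.range k).map fun t => A (p t) (p (t + 1))).prod = pathProd A p k := by
  induction k with
  | zero => simp [pathProd]
  | succ k ih =>
    rw [List.range_succ, List.map_append, List.prod_append, pathProd_succ, ih]
    simp

end Final


/-- Yoeli's theorem: over an idempotent (commutative) semiring, if `A` has unit diagonal
and unit permanent, then every circuit of `A` has weight at most `1` in the natural
order, and the adjugate of `A` (whose `(i,j)` entry is the permanent of `A` with row `j`
and column `i` deleted) equals the Kleene star `A^* = I + A + ⋯ + A^{n-1}`. -/
theorem stmt7 {R : Type*} [CommSemiring R] (hidem : ∀ a : R, a + a = a)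
    (n : ℕ) (A : Matrix (Fin (n + 1)) (Fin (n + 1)) R)
    (hdiag : ∀ i, A i i = 1) (hper : perm A = 1) :
    (∀ (k : ℕ) (p : ℕ → Fin (n + 1)), 0 < k → p k = p 0 →
      ((List.range k).map fun t => A (p t) (p (t + 1))).prod + 1 = 1) ∧
    ∀ i j : Fin (n + 1),
      perm (A.submatrix j.succAbove i.succAbove) =
        (∑ k ∈ Finset.range (n + 1), A ^ k) i j := by
  constructor
  · intro k p hk hpk
    rw [list_prod_eq_pathProd]
    exact circuit_le_one hidem hdiag hper k p hk hpk
  · intro i j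
    have hsum_apply : (∑ k ∈ Finset.range (n + 1), A ^ k) i j
        = ∑ k ∈ Finset.range (n + 1), (A ^ k) i j := Matrix.sum_apply i j _ _
    have h1 : (∑ k ∈ Finset.range (n + 1), (A ^ k) i j) = (A ^ n) i j :=
      yle_antisymm
        (ysum_le hidem fun k hk => pow_entry_le_pow_n hidem hdiag i j
          (by rw [Finset.mem_range] at hk; omega))
        (yle_sum hidem (f := fun k => (A ^ k) i j) (Finset.mem_range.mpr (by omega)))
    have h2 : adjE A i j = (A ^ n) i j :=
      yle_antisymm (adjE_le_pow hidem hdiag hper i j)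
        (by have := pow_le_adjE hidem hdiag hper j n (fun _ => i) 0
            rwa [pathProd, Finset.range_zero, Finset.prod_empty, one_mul] at this)
    rw [hsum_apply, h1, ← h2]
    rfl
end

section
/- Let R be a totally ordered idempotent semifield and let C ∈ M_n(R) with per C ≠ 0, where per C = Σ_{σ∈S_n} C_{1σ(1)}⋯C_{nσ(n)}. Then there exist diagonal matrices D and D' with invertible diagonal entries and a permutation matrix Σ such that the matrix B = Σ·D·C·D' satisfies B_{ij} ≤ 1 for all i, j ∈ [n] and B_{ii} = 1 for all i ∈ [n]. -/
open Finset

open Finset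

section Aux

variable {R : Type*} [CommSemiring R]

/-- Weight of a walk starting at `k` through the list of vertices. -/
def wtAux {α : Type*} (G : α → α → R) : α → List α → R
  | _, [] => 1
  | k, m :: rest => G k m * wtAux G m rest

lemma wtAux_nil {α : Type*} (G : α → α → R) (k : α) : wtAux G k [] = 1 := rfl

lemma wtAux_cons {α : Type*} (G : α → α → R) (k m : α) (rest : List α) :
    wtAux G k (m :: rest) = G k m * wtAux G m rest := rfl

lemma wtAux_append {α : Type*} (G : α → α → R) (k m : α) (l₁ l₂ : List α) :
    wtAux G k (l₁ ++ m :: l₂) = wtAux G k (l₁ ++ [m]) * wtAux G m l₂ := by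
  induction l₁ generalizing k with
  | nil => simp [wtAux_cons, wtAux_nil]
  | cons a t ih => simp [List.cons_append, wtAux_cons, ih, mul_assoc]

lemma nodup_or_split {α : Type*} [DecidableEq α] (M : List α) :
    M.Nodup ∨ ∃ (l₁ : List α) (m : α) (l₂ l₃ : List α),
      M = l₁ ++ m :: l₂ ++ m :: l₃ ∧ (m :: l₂).Nodup := by
  induction M with
  | nil => left; simp
  | cons x rest ih =>
    rcases ih with h | ⟨l₁, m, l₂, l₃, rfl, hn⟩
    · by_cases hx : x ∈ rest
      · right
        obtain ⟨l₂, l₃, rfl⟩ := List.append_of_mem hx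
        refine ⟨[], x, l₂, l₃, by simp, ?_⟩
        have h2 : l₂.Nodup := (List.nodup_append.mp h).1
        have h3 : x ∉ l₂ := by
          intro hmem
          exact (List.nodup_append'.mp h).2.2 hmem (List.mem_cons_self : x ∈ x :: l₃)
        exact List.nodup_cons.mpr ⟨h3, h2⟩
      · left; exact List.nodup_cons.mpr ⟨hx, h⟩
    · right; exact ⟨x :: l₁, m, l₂, l₃, by simp, hn⟩

lemma wt_cycle_eq' {α : Type*} [DecidableEq α] (G : α → α → R) :
    ∀ (l : List α) (b : α), (b :: l).Nodup → ∀ a, a ∉ l →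
      wtAux G b (l ++ [a]) =
        ∏ x ∈ (b :: l).toFinset, G x (Equiv.swap a b ((b :: l).formPerm x)) := by
  intro l
  induction l with
  | nil =>
    intro b _ a _
    simp [wtAux_cons, wtAux_nil, List.formPerm_singleton, Equiv.swap_apply_right]
  | cons d t ih =>
    intro b hnd a ha
    have hbd : b ∉ d :: t := by
      intro h; exact (List.nodup_cons.mp hnd).1 h
    have hdt : (d :: t).Nodup := (List.nodup_cons.mp hnd).2
    have had : a ≠ d := by
      intro h; exact ha (h ▸ (List.mem_cons_self : d ∈ d :: t))
    have hat : a ∉ t := fun h => ha (List.mem_cons_of_mem d h)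
    have hbne : b ∉ (d :: t).toFinset := by
      simpa using hbd
    rw [List.toFinset_cons, Finset.prod_insert hbne]
    have hfp : (b :: d :: t).formPerm = Equiv.swap b d * (d :: t).formPerm :=
      List.formPerm_cons_cons b d t
    have hterm : G b (Equiv.swap a b ((b :: d :: t).formPerm b)) = G b d := by
      rw [hfp]
      have h1 : (d :: t).formPerm b = b := List.formPerm_apply_of_notMem hbd
      have hdb : d ≠ b := fun h => hbd (h ▸ (List.mem_cons_self : d ∈ d :: t))
      simp [Equiv.Perm.mul_apply, h1, Equiv.swap_apply_left,
        Equiv.swap_apply_of_ne_of_ne had.symm hdb]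
    rw [hterm]
    have hrest : ∀ x ∈ (d :: t).toFinset,
        G x (Equiv.swap a b ((b :: d :: t).formPerm x)) =
        G x (Equiv.swap a d ((d :: t).formPerm x)) := by
      intro x hx
      rw [hfp]
      have hy : (d :: t).formPerm x ∈ d :: t :=
        List.formPerm_apply_mem_of_mem (by simpa using hx)
      by_cases hyd : (d :: t).formPerm x = d
      · simp [Equiv.Perm.mul_apply, hyd]
      · have hyb : (d :: t).formPerm x ≠ b := fun h => hbd (h ▸ hy)
        have hya : (d :: t).formPerm x ≠ a := fun h => ha (h ▸ hy)
        simp [Equiv.Perm.mul_apply, Equiv.swap_apply_of_ne_of_ne hyb hyd,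
          Equiv.swap_apply_of_ne_of_ne hya hyb, Equiv.swap_apply_of_ne_of_ne hya hyd]
    rw [Finset.prod_congr rfl hrest]
    rw [List.cons_append, wtAux_cons, ih d hdt a hat]

lemma wt_cycle_eq {α : Type*} [DecidableEq α] (G : α → α → R) (l : List α) (b : α)
    (h : (b :: l).Nodup) :
    wtAux G b (l ++ [b]) = ∏ x ∈ (b :: l).toFinset, G x ((b :: l).formPerm x) := by
  have hb : b ∉ l := (List.nodup_cons.mp h).1
  have := wt_cycle_eq' G l b h b hb
  simpa [Equiv.swap_self] using this

section Ord

lemma leAux_trans {a b c : R} (hab : a + b = b) (hbc : b + c = c) : a + c = c := by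
  rw [← hbc, ← add_assoc, hab]

lemma sum_leAux {ι : Type*} (s : Finset ι) (f : ι → R) (c : R)
    (h : ∀ x ∈ s, f x + c = c) : (∑ x ∈ s, f x) + c = c := by
  classical
  induction s using Finset.induction_on with
  | empty => simp
  | @insert a s hx ih =>
    rw [Finset.sum_insert hx, add_assoc, ih fun x hx => h x (Finset.mem_insert_of_mem hx),
      h a (Finset.mem_insert_self a s)]

lemma leAux_sum (hidem : ∀ a : R, a + a = a) {ι : Type*} [DecidableEq ι] (s : Finset ι) (f : ι → R) {x : ι}
    (hx : x ∈ s) : f x + (∑ y ∈ s, f y) = ∑ y ∈ s, f y := by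
  rw [← Finset.add_sum_erase s f hx, ← add_assoc, hidem]

lemma sum_attainsAux (htot : ∀ a b : R, a + b = b ∨ a + b = a) {ι : Type*}
    {s : Finset ι} (hs : s.Nonempty) (f : ι → R) :
    ∃ x ∈ s, ∑ y ∈ s, f y = f x := by
  classical
  induction hs using Finset.Nonempty.cons_induction with
  | singleton a => exact ⟨a, by simp, by simp⟩
  | cons a s ha hs ih =>
    obtain ⟨x, hx, hsum⟩ := ih
    rw [Finset.sum_cons, hsum]
    rcases htot (f a) (f x) with h | h
    · exact ⟨x, Finset.mem_cons_of_mem hx, h⟩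
    · exact ⟨a, Finset.mem_cons_self a s, h⟩

end Ord

end Aux


/-- Butkovič's normal form: over a totally ordered idempotent semifield `R`, any matrix
`C` with nonzero permanent can be brought, by two diagonal scalings with invertible
diagonal entries and a row permutation, to a matrix `B = Σ·D·C·D'` with all entries at
most `1` (in the natural order `a ≤ b ↔ a + b = b`) and unit diagonal. -/
theorem stmt9 {R : Type*} [CommSemiring R]
    (hidem : ∀ a : R, a + a = a)
    (htot : ∀ a b : R, a + b = b ∨ a + b = a)
    (hinv : ∀ a : R, a ≠ 0 → IsUnit a)
    (n : ℕ) (C : Matrix (Fin n) (Fin n) R) (hC : perm C ≠ 0) :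
    ∃ (D D' : Matrix (Fin n) (Fin n) R) (σ : Equiv.Perm (Fin n)),
      (∀ i j, i ≠ j → D i j = 0) ∧ (∀ i, IsUnit (D i i)) ∧
      (∀ i j, i ≠ j → D' i j = 0) ∧ (∀ i, IsUnit (D' i i)) ∧
      ∃ B : Matrix (Fin n) (Fin n) R,
        B = (Matrix.of fun i j => if σ i = j then (1 : R) else 0) * D * C * D' ∧
        (∀ i j, B i j + 1 = 1) ∧ ∀ i, B i i = 1 := by
  classical
  have h10 : (1 : R) ≠ 0 := by
    intro h
    exact hC (by rw [← mul_one (perm C), h, mul_zero])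
  -- choose an optimal permutation τ
  obtain ⟨τ, -, hτ⟩ := sum_attainsAux htot Finset.univ_nonempty
    (fun σ : Equiv.Perm (Fin n) => ∏ i, C i (σ i))
  have hpd : perm C = ∑ σ : Equiv.Perm (Fin n), ∏ i, C i (σ i) := rfl
  have hP : perm C = ∏ i, C i (τ i) := by rw [hpd]; exact hτ
  have hmax : ∀ ρ : Equiv.Perm (Fin n), (∏ i, C i (ρ i)) + perm C = perm C := by
    intro ρ
    rw [hpd]
    exact leAux_sum hidem Finset.univ (fun σ : Equiv.Perm (Fin n) => ∏ i, C i (σ i))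
      (Finset.mem_univ ρ)
  have hc : ∀ i, C i (τ i) ≠ 0 := by
    intro i h
    exact hC (by rw [hP]; exact Finset.prod_eq_zero (Finset.mem_univ i) h)
  choose e hce using fun i => (hinv _ (hc i)).exists_right_inv
  set G : Fin n → Fin n → R := fun k m => C k (τ m) * e k with hG
  -- cycle lemma
  have hcycle : ∀ (l : List (Fin n)) (k : Fin n), (k :: l).Nodup →
      wtAux G k (l ++ [k]) + 1 = 1 := by
    intro l k hnd
    set c := (k :: l).formPerm with hc'
    set L := (k :: l).toFinset with hL
    have h1 : wtAux G k (l ++ [k]) = ∏ x ∈ L, G x (c x) := wt_cycle_eq G l k hnd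
    have hfix : ∀ x ∈ Lᶜ, c x = x := by
      intro x hx
      exact List.formPerm_apply_of_notMem
        (fun h => (Finset.mem_compl.mp hx) (by rw [hL]; exact List.mem_toFinset.mpr h))
    have hsplit : (∏ x ∈ L, C x (τ (c x))) * (∏ x ∈ Lᶜ, C x (τ x)) = ∏ i, C i (τ (c i)) := by
      rw [← Finset.prod_mul_prod_compl L (fun i => C i (τ (c i)))]
      congr 1
      exact Finset.prod_congr rfl fun x hx => by rw [hfix x hx]
    have hmaxc := hmax (τ * c)
    simp only [Equiv.Perm.mul_apply] at hmaxc
    rw [← hsplit] at hmaxc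
    have hPE : perm C * ∏ i, e i = 1 := by
      rw [hP, ← Finset.prod_mul_distrib]
      exact Finset.prod_eq_one fun i _ => hce i
    have hYE : (∏ x ∈ Lᶜ, C x (τ x)) * (∏ x ∈ Lᶜ, e x) = 1 := by
      rw [← Finset.prod_mul_distrib]
      exact Finset.prod_eq_one fun i _ => hce i
    have hE : (∏ i, e i) = (∏ x ∈ L, e x) * (∏ x ∈ Lᶜ, e x) :=
      (Finset.prod_mul_prod_compl L e).symm
    have h2 : ((∏ x ∈ L, C x (τ (c x))) * (∏ x ∈ Lᶜ, C x (τ x))) * (∏ i, e i)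
        + perm C * (∏ i, e i) = perm C * (∏ i, e i) := by
      rw [← add_mul, hmaxc]
    rw [hPE, hE] at h2
    have h3 : ((∏ x ∈ L, C x (τ (c x))) * (∏ x ∈ Lᶜ, C x (τ x))) *
        ((∏ x ∈ L, e x) * (∏ x ∈ Lᶜ, e x)) =
        ((∏ x ∈ L, C x (τ (c x))) * (∏ x ∈ L, e x)) *
        ((∏ x ∈ Lᶜ, C x (τ x)) * (∏ x ∈ Lᶜ, e x)) := by ring
    rw [h3, hYE, mul_one] at h2
    have h4 : (∏ x ∈ L, G x (c x)) =
        (∏ x ∈ L, C x (τ (c x))) * (∏ x ∈ L, e x) := by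
      rw [← Finset.prod_mul_distrib]
    rw [h1, h4]
    exact h2
  -- the potential w
  set w : Fin n → R := fun k => ∑ p ∈ Finset.range n,
    ∑ f : Fin p → Fin n, wtAux G k (List.ofFn f) with hw
  have hmem : ∀ (k : Fin n) (l' : List (Fin n)), l'.length < n →
      wtAux G k l' + w k = w k := by
    intro k l' hl
    have h1 : wtAux G k l' +
        (∑ f : Fin l'.length → Fin n, wtAux G k (List.ofFn f)) =
        ∑ f : Fin l'.length → Fin n, wtAux G k (List.ofFn f) := by
      have := leAux_sum hidem Finset.univ
        (fun f : Fin l'.length → Fin n => wtAux G k (List.ofFn f)) (Finset.mem_univ l'.get)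
      simpa [List.ofFn_get] using this
    have h2 : (∑ f : Fin l'.length → Fin n, wtAux G k (List.ofFn f)) + w k = w k :=
      leAux_sum hidem (Finset.range n)
        (fun p => ∑ f : Fin p → Fin n, wtAux G k (List.ofFn f)) (Finset.mem_range.mpr hl)
    exact leAux_trans h1 h2
  have hlist : ∀ (k : Fin n) (l' : List (Fin n)), l'.length ≤ n →
      wtAux G k l' + w k = w k := by
    intro k l' hl
    rcases lt_or_eq_of_le hl with h | h
    · exact hmem k l' h
    · have hcard : ¬ (k :: l').Nodup := by
        intro hnd
        have := hnd.length_le_card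
        simp [Fintype.card_fin] at this
        omega
      rcases nodup_or_split (k :: l') with hnd | ⟨l₁, m, l₂, l₃, heq, hnd2⟩
      · exact absurd hnd hcard
      cases l₁ with
      | nil =>
        simp only [List.nil_append, List.cons_append, List.cons.injEq] at heq
        obtain ⟨rfl, hl'⟩ := heq
        have hl3 : l₃.length < n := by
          have hlen := congrArg List.length hl'
          simp [List.length_append] at hlen
          omega
        rw [hl', wtAux_append]
        have hcyc := hcycle l₂ k hnd2
        have hle : wtAux G k (l₂ ++ [k]) * wtAux G k l₃ + wtAux G k l₃ = wtAux G k l₃ := by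
          have := congrArg (· * wtAux G k l₃) hcyc
          simpa [add_mul] using this
        exact leAux_trans hle (hmem k l₃ hl3)
      | cons a t =>
        simp only [List.cons_append, List.cons.injEq] at heq
        obtain ⟨hka, hl'⟩ := heq
        subst hka
        have hl'2 : l' = t ++ m :: (l₂ ++ m :: l₃) := by
          rw [hl']; simp [List.cons_append, List.append_assoc]
        have hlen : t.length + 1 + l₃.length < n := by
          have hlen := congrArg List.length hl'2
          simp [List.length_append] at hlen
          omega
        rw [hl'2, wtAux_append G k m t (l₂ ++ m :: l₃), wtAux_append G m m l₂ l₃]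
        have hcyc := hcycle l₂ m hnd2
        have hle : wtAux G k (t ++ [m]) * (wtAux G m (l₂ ++ [m]) * wtAux G m l₃)
            + wtAux G k (t ++ [m]) * wtAux G m l₃
            = wtAux G k (t ++ [m]) * wtAux G m l₃ := by
          have h5 := congrArg (· * (wtAux G k (t ++ [m]) * wtAux G m l₃)) hcyc
          simp only [add_mul, one_mul] at h5
          calc wtAux G k (t ++ [m]) * (wtAux G m (l₂ ++ [m]) * wtAux G m l₃)
              + wtAux G k (t ++ [m]) * wtAux G m l₃
              = wtAux G m (l₂ ++ [m]) * (wtAux G k (t ++ [m]) * wtAux G m l₃)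
              + wtAux G k (t ++ [m]) * wtAux G m l₃ := by ring
            _ = wtAux G k (t ++ [m]) * wtAux G m l₃ := h5
        have h6 : wtAux G k (t ++ [m]) * wtAux G m l₃ + w k = w k := by
          rw [← wtAux_append]
          apply hmem
          simp [List.length_append]
          omega
        exact leAux_trans hle h6
  have hwG : ∀ k m, G k m * w m + w k = w k := by
    intro k m
    have hexp : G k m * w m = ∑ p ∈ Finset.range n,
        ∑ f : Fin p → Fin n, wtAux G k (m :: List.ofFn f) := by
      simp [hw, Finset.mul_sum, wtAux_cons]
    rw [hexp]
    apply sum_leAux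
    intro p hp
    apply sum_leAux
    intro f _
    apply hlist k (m :: List.ofFn f)
    simp only [List.length_cons, List.length_ofFn]
    exact Finset.mem_range.mp hp
  have hw1 : ∀ k, 1 + w k = w k := by
    intro k
    have := hmem k [] k.pos
    simpa [wtAux_nil] using this
  have hw0 : ∀ k, w k ≠ 0 := by
    intro k h
    have := hw1 k
    rw [h, add_zero] at this
    exact h10 this
  choose z hz using fun k => (hinv _ (hw0 k)).exists_right_inv
  -- assemble
  refine ⟨Matrix.diagonal (fun k => e k * z k), Matrix.diagonal (fun j => w (τ.symm j)),
    τ⁻¹, fun i j h => Matrix.diagonal_apply_ne _ h, ?_, fun i j h => Matrix.diagonal_apply_ne _ h, ?_,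
    Matrix.of (fun i j => (e (τ.symm i) * z (τ.symm i)) * C (τ.symm i) j * w (τ.symm j)),
    ?_, ?_, ?_⟩
  · intro i
    rw [Matrix.diagonal_apply_eq]
    refine IsUnit.of_mul_eq_one (C i (τ i) * w i) ?_
    have h5 : (e i * z i) * (C i (τ i) * w i) = (C i (τ i) * e i) * (w i * z i) := by ring
    rw [h5, hce i, hz i, mul_one]
  · intro i
    rw [Matrix.diagonal_apply_eq]
    exact IsUnit.of_mul_eq_one (z (τ.symm i)) (hz _)
  · ext i j
    simp only [Matrix.of_apply]
    rw [Matrix.mul_diagonal, Matrix.mul_apply]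
    have hent : ∀ k, ((Matrix.of fun i j => if (τ⁻¹ : Equiv.Perm (Fin n)) i = j then (1:R) else 0) *
        Matrix.diagonal (fun k => e k * z k)) i k =
        (if τ.symm i = k then (1:R) else 0) * (e k * z k) := by
      intro k
      rw [Matrix.mul_diagonal]
      simp [Equiv.Perm.inv_def]
    simp only [hent, ite_mul, one_mul, zero_mul]
    rw [Finset.sum_ite_eq]
    simp
  · intro i j
    simp only [Matrix.of_apply]
    set k := τ.symm i
    set m := τ.symm j with hm
    have hjm : τ m = j := τ.apply_symm_apply j
    have key := hwG k m
    have h2 := congrArg (· * z k) key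
    simp only [add_mul] at h2
    rw [hz k] at h2
    have h3 : (e k * z k) * C k j * w m = G k m * w m * z k := by
      rw [← hjm, hG]; ring
    rw [h3]
    exact h2
  · intro i
    simp only [Matrix.of_apply]
    set k := τ.symm i
    have hk : τ k = i := τ.apply_symm_apply i
    have h3 : (e k * z k) * C k i * w k = (C k (τ k) * e k) * (w k * z k) := by
      rw [hk]; ring
    rw [h3, hce k, hz k, mul_one]
end

section
/- Let S be a commutative semiring with a symmetry τ and a thin set S^∨. Then S allows weak balance elimination (i.e., satisfies Property 1: S^∨∖{0} is closed under multiplication, and Property 2: for all n, p ≥ 1, a ∈ S^∨, C ∈ M_{n,p}(S), b ∈ S^p, d ∈ S^n, and x ∈ (S^∨)^p, if a·x ∇ b and C·x ∇ d entrywise then C·b ∇ a·d entrywise) if and only if Property 1 holds together with the scalar Property 2': for all b, c, d ∈ S and x ∈ S^∨, x ∇ b and c·x ∇ d imply c·b ∇ d. -/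
open Finset

variable {S : Type*}

/-- A symmetry of a commutative semiring `S` (written `-a := τ a`). -/
def IsSymmetry [CommSemiring S] (τ : S → S) : Prop :=
  (∀ a b, τ (a + b) = τ a + τ b) ∧ τ 0 = 0 ∧
  (∀ a b, τ (a * b) = a * τ b) ∧ ∀ a, τ (τ a) = a

/-- The set `S° = {a + τ a : a ∈ S}` of balanced elements. -/
def bSet [CommSemiring S] (τ : S → S) : Set S := {x | ∃ a, x = a + τ a}

/-- The balance relation: `x ∇ y ↔ x + τ y ∈ S°`. -/
def bal [CommSemiring S] (τ : S → S) (x y : S) : Prop := x + τ y ∈ bSet τ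

/-- `V` is a thin set: `V ⊆ (S ∖ S°) ∪ {0}`, `0 ∈ V`, and `V` contains all units. -/
def IsThin [CommSemiring S] (τ : S → S) (V : Set S) : Prop :=
  (0 : S) ∈ V ∧ (∀ x : S, IsUnit x → x ∈ V) ∧ ∀ x ∈ V, x = 0 ∨ x ∉ bSet τ

/-- `S` (with symmetry `τ` and thin set `V`) allows weak balance elimination:
`V ∖ {0}` is closed under multiplication, and the weak transitivity of systems of
balances holds. -/
def AllowsWeakElim [CommSemiring S] (τ : S → S) (V : Set S) : Prop :=
  (∀ x ∈ V, ∀ y ∈ V, x ≠ 0 → y ≠ 0 → x * y ∈ V ∧ x * y ≠ 0) ∧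
  ∀ (n p : ℕ) (a : S), a ∈ V → ∀ (C : Matrix (Fin n) (Fin p) S) (b : Fin p → S)
    (d : Fin n → S) (x : Fin p → S), (∀ j, x j ∈ V) →
    (∀ j, bal τ (a * x j) (b j)) → (∀ i, bal τ (∑ j, C i j * x j) (d i)) →
    ∀ i, bal τ (∑ j, C i j * b j) (a * d i)

/-- `S` allows strong balance elimination: weak balance elimination, plus the fact that
two balanced thin elements are equal. -/
def AllowsStrongElim [CommSemiring S] (τ : S → S) (V : Set S) : Prop :=
  AllowsWeakElim τ V ∧ ∀ x ∈ V, ∀ y ∈ V, bal τ x y → x = y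

/-- The sign of a permutation in `S`: `1` for even permutations and `-1 = τ 1` for odd
ones. -/
noncomputable def sgnS [CommSemiring S] (τ : S → S) {n : ℕ} (σ : Equiv.Perm (Fin n)) : S :=
  if Equiv.Perm.sign σ = 1 then 1 else τ 1

/-- `(-1)^k` in `S`: `1` for even `k` and `τ 1` for odd `k`. -/
def sgnPow [CommSemiring S] (τ : S → S) (k : ℕ) : S := if Even k then 1 else τ 1

/-- The determinant of a matrix over a commutative semiring with symmetry `τ`. -/
noncomputable def sdet [CommSemiring S] (τ : S → S) {n : ℕ}
    (A : Matrix (Fin n) (Fin n) S) : S :=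
  ∑ σ : Equiv.Perm (Fin n), sgnS τ σ * ∏ i, A i (σ i)

/-- The adjugate matrix: `(A^adj)_{ij} = (-1)^{i+j} · det A(j,i)`, where `A(j,i)` is the
submatrix of `A` with row `j` and column `i` deleted. -/
noncomputable def sadj [CommSemiring S] (τ : S → S) {n : ℕ}
    (A : Matrix (Fin (n + 1)) (Fin (n + 1)) S) : Matrix (Fin (n + 1)) (Fin (n + 1)) S :=
  Matrix.of fun i j =>
    sgnPow τ (i.val + j.val) * sdet τ (A.submatrix j.succAbove i.succAbove)

lemma bSet_mul' [CommSemiring S] {τ : S → S} (hτ : IsSymmetry τ) (c : S) {x : S}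
    (hx : x ∈ bSet τ) : c * x ∈ bSet τ := by
  obtain ⟨a, rfl⟩ := hx
  exact ⟨c * a, by rw [mul_add, hτ.2.2.1]⟩

lemma bal_mul' [CommSemiring S] {τ : S → S} (hτ : IsSymmetry τ) (c : S) {u v : S}
    (h : bal τ u v) : bal τ (c * u) (c * v) := by
  unfold bal at h ⊢
  rw [hτ.2.2.1, ← mul_add]
  exact bSet_mul' hτ c h

lemma bal_shift [CommSemiring S] {τ : S → S} (hτ : IsSymmetry τ) (u r e : S) :
    bal τ (u + r) e ↔ bal τ u (e + τ r) := by
  unfold bal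
  rw [hτ.1, hτ.2.2.2, show u + r + τ e = u + (τ e + r) by ring]

lemma elim_aux [CommSemiring S] {τ : S → S} (hτ : IsSymmetry τ) (V : Set S)
    (hsc : ∀ b c d : S, ∀ x ∈ V, bal τ x b → bal τ (c * x) d → bal τ (c * b) d) :
    ∀ (p : ℕ) (c y b : Fin p → S) (e : S), (∀ j, y j ∈ V) →
      (∀ j, bal τ (y j) (b j)) → bal τ (∑ j, c j * y j) e →
      bal τ (∑ j, c j * b j) e := by
  intro p
  induction p with
  | zero => intro c y b e _ _ h; simpa using h
  | succ p ih =>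
    intro c y b e hyV hyb h
    rw [Fin.sum_univ_succ] at h ⊢
    rw [bal_shift hτ] at h
    have h1 : bal τ (c 0 * b 0) (e + τ (∑ j : Fin p, c j.succ * y j.succ)) :=
      hsc _ _ _ _ (hyV 0) (hyb 0) h
    rw [← bal_shift hτ, add_comm, bal_shift hτ] at h1
    have h2 := ih (fun j => c j.succ) (fun j => y j.succ) (fun j => b j.succ) _
      (fun j => hyV j.succ) (fun j => hyb j.succ) h1
    rwa [← bal_shift hτ, add_comm] at h2

/-- `S` allows weak balance elimination iff `V ∖ {0}` is closed under multiplication and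
the weak transitivity of scalar balances holds. -/
theorem stmt10 [CommSemiring S] (τ : S → S) (hτ : IsSymmetry τ)
    (V : Set S) (hne : bSet τ ≠ Set.univ) (hV : IsThin τ V) :
    AllowsWeakElim τ V ↔
      ((∀ x ∈ V, ∀ y ∈ V, x ≠ 0 → y ≠ 0 → x * y ∈ V ∧ x * y ≠ 0) ∧
       ∀ b c d : S, ∀ x ∈ V, bal τ x b → bal τ (c * x) d → bal τ (c * b) d) := by
  constructor
  · rintro ⟨h1, h2⟩
    refine ⟨h1, fun b c d x hx hxb hcxd => ?_⟩
    have := h2 1 1 1 (hV.2.1 1 isUnit_one) (fun _ _ => c) (fun _ => b) (fun _ => d)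
      (fun _ => x) (fun _ => hx) (fun _ => by simpa using hxb)
      (fun _ => by simpa using hcxd) 0
    simpa using this
  · rintro ⟨h1, hsc⟩
    refine ⟨h1, fun n p a haV C b d x hxV hab hCx i => ?_⟩
    have hyV : ∀ j, a * x j ∈ V := by
      intro j
      by_cases ha : a = 0
      · simpa [ha] using hV.1
      by_cases hxj : x j = 0
      · simpa [hxj] using hV.1
      exact (h1 a haV (x j) (hxV j) ha hxj).1
    have hsum : bal τ (∑ j, C i j * (a * x j)) (a * d i) := by
      have := bal_mul' hτ a (hCx i)
      rwa [Finset.mul_sum, Finset.sum_congr rfl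
        (fun j _ => show a * (C i j * x j) = C i j * (a * x j) by ring)] at this
    exact elim_aux hτ V hsc p (C i) (fun j => a * x j) b (a * d i) hyV hab hsum
end

section
/- Let S be a commutative semiring with a symmetry τ and a thin set S^∨ satisfying: (i) for all x ∈ S^∨ and b, d ∈ S, b ∇ x and x ∇ d imply b ∇ d; (ii) S^∨∖{0} is closed under multiplication; (iii) every element of S is a finite sum of elements of S^∨. Then for all b, c, d ∈ S and x ∈ S^∨, x ∇ b and c·x ∇ d imply c·b ∇ d; consequently S allows weak balance elimination. -/
open Finset

variable {S : Type*}

section Aux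

variable [CommSemiring S] {τ : S → S}

lemma bSet_add' (hτ : IsSymmetry τ) {u v : S} (hu : u ∈ bSet τ) (hv : v ∈ bSet τ) :
    u + v ∈ bSet τ := by
  obtain ⟨a, rfl⟩ := hu
  obtain ⟨b, rfl⟩ := hv
  exact ⟨a + b, by rw [hτ.1]; ring⟩

lemma bSet_tau' (hτ : IsSymmetry τ) {u : S} (hu : u ∈ bSet τ) : τ u ∈ bSet τ := by
  obtain ⟨a, rfl⟩ := hu
  exact ⟨τ a, by rw [hτ.1]⟩

lemma bSet_smul' (hτ : IsSymmetry τ) (c : S) {u : S} (hu : u ∈ bSet τ) :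
    c * u ∈ bSet τ := by
  obtain ⟨a, rfl⟩ := hu
  exact ⟨c * a, by rw [mul_add, hτ.2.2.1]⟩

lemma bal_symm' (hτ : IsSymmetry τ) {u v : S} (h : bal τ u v) : bal τ v u := by
  have : v + τ u = τ (u + τ v) := by rw [hτ.1, hτ.2.2.2]; ring
  unfold bal
  rw [this]
  exact bSet_tau' hτ h

lemma bal_smul' (hτ : IsSymmetry τ) (c : S) {u v : S} (h : bal τ u v) :
    bal τ (c * u) (c * v) := by
  have : c * u + τ (c * v) = c * (u + τ v) := by rw [hτ.2.2.1, mul_add]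
  unfold bal
  rw [this]
  exact bSet_smul' hτ c h

/-- Products of elements of `V` stay in `V` (including the zero cases). -/
lemma mulV' {V : Set S} (hV0 : (0 : S) ∈ V)
    (h2 : ∀ x ∈ V, ∀ y ∈ V, x ≠ 0 → y ≠ 0 → x * y ∈ V ∧ x * y ≠ 0)
    {x y : S} (hx : x ∈ V) (hy : y ∈ V) : x * y ∈ V := by
  rcases eq_or_ne x 0 with rfl | hx0
  · simpa using hV0
  rcases eq_or_ne y 0 with rfl | hy0
  · simpa using hV0
  exact (h2 x hx y hy hx0 hy0).1

/-- The key scalar substitution lemma: the first conjunct of the theorem. -/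
lemma keyV (hτ : IsSymmetry τ) {V : Set S} (hV0 : (0 : S) ∈ V)
    (h1 : ∀ x ∈ V, ∀ b d : S, bal τ b x → bal τ x d → bal τ b d)
    (h2 : ∀ x ∈ V, ∀ y ∈ V, x ≠ 0 → y ≠ 0 → x * y ∈ V ∧ x * y ≠ 0)
    (h3 : ∀ s : S, ∃ l : List S, (∀ x ∈ l, x ∈ V) ∧ l.sum = s) :
    ∀ x ∈ V, ∀ b c d : S, bal τ x b → bal τ (c * x) d → bal τ (c * b) d := by
  obtain ⟨hadd, hzero, hmul, hinv⟩ := hτ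
  intro x hx b c d hxb hcxd
  obtain ⟨l, hl, rfl⟩ := h3 c
  induction l generalizing d with
  | nil =>
    simp only [List.sum_nil, zero_mul] at hcxd ⊢
    exact hcxd
  | cons c₀ t ih =>
    have hc₀ : c₀ ∈ V := hl c₀ (by simp)
    have hlt : ∀ y ∈ t, y ∈ V := fun y hy => hl y (by simp [hy])
    set s := t.sum with hs
    -- hcxd : bal ((c₀ + s) * x) d
    have hw : c₀ * x ∈ V := mulV' hV0 h2 hc₀ hx
    -- bal (c₀ * b) (c₀ * x)
    have hbw : bal τ (c₀ * b) (c₀ * x) :=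
      bal_smul' ⟨hadd, hzero, hmul, hinv⟩ c₀ (bal_symm' ⟨hadd, hzero, hmul, hinv⟩ hxb)
    -- bal (c₀ * x) (τ (s * x) + d)
    have hwd : bal τ (c₀ * x) (τ (s * x) + d) := by
      have heq : c₀ * x + τ (τ (s * x) + d) = (c₀ + s) * x + τ d := by
        rw [hadd, hinv, add_mul]; ring
      unfold bal
      rw [heq]
      exact hcxd
    have hstep := h1 (c₀ * x) hw (c₀ * b) (τ (s * x) + d) hbw hwd
    -- hstep : bal (c₀ * b) (τ (s * x) + d), i.e. c₀*b + s*x + τ d ∈ bSet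
    have hsx : bal τ (s * x) (τ (c₀ * b) + d) := by
      have heq : s * x + τ (τ (c₀ * b) + d) = c₀ * b + τ (τ (s * x) + d) := by
        rw [hadd, hadd, hinv, hinv]; ring
      unfold bal
      rw [heq]
      exact hstep
    have hfin := ih (τ (c₀ * b) + d) hlt hsx
    -- hfin : bal (s * b) (τ (c₀ * b) + d)
    have heq : (c₀ + s) * b + τ d = s * b + τ (τ (c₀ * b) + d) := by
      rw [hadd, hinv, add_mul]; ring
    unfold bal
    rw [List.sum_cons, heq]
    exact hfin

/-- Substitution in sums of balances. -/
lemma sumSubstV (hτ : IsSymmetry τ) {V : Set S} (hV0 : (0 : S) ∈ V)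
    (h1 : ∀ x ∈ V, ∀ b d : S, bal τ b x → bal τ x d → bal τ b d)
    (h2 : ∀ x ∈ V, ∀ y ∈ V, x ≠ 0 → y ≠ 0 → x * y ∈ V ∧ x * y ≠ 0)
    (h3 : ∀ s : S, ∃ l : List S, (∀ x ∈ l, x ∈ V) ∧ l.sum = s) :
    ∀ (p : ℕ) (w b : Fin p → S), (∀ j, w j ∈ V) → (∀ j, bal τ (w j) (b j)) →
      ∀ (c : Fin p → S) (d : S), bal τ (∑ j, c j * w j) d → bal τ (∑ j, c j * b j) d := by
  obtain ⟨hadd, hzero, hmul, hinv⟩ := hτ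
  have hτ' : IsSymmetry τ := ⟨hadd, hzero, hmul, hinv⟩
  intro p
  induction p with
  | zero =>
    intro w b _ _ c d h
    simpa using h
  | succ p ih =>
    intro w b hw hwb c d h
    rw [Fin.sum_univ_succ] at h
    -- h : bal (c 0 * w 0 + ∑ tail w) d
    set W : S := ∑ j : Fin p, c j.succ * w j.succ with hW
    have hcw : bal τ (c 0 * w 0) (τ W + d) := by
      have heq : c 0 * w 0 + τ (τ W + d) = c 0 * w 0 + W + τ d := by
        rw [hadd, hinv]; ring
      unfold bal
      rw [heq]
      exact h
    have hcb := keyV hτ' hV0 h1 h2 h3 (w 0) (hw 0) (b 0) (c 0) (τ W + d) (hwb 0) hcw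
    -- hcb : bal (c 0 * b 0) (τ W + d)
    have hWd : bal τ W (τ (c 0 * b 0) + d) := by
      have heq : W + τ (τ (c 0 * b 0) + d) = c 0 * b 0 + τ (τ W + d) := by
        rw [hadd, hadd, hinv, hinv]; ring
      unfold bal
      rw [heq]
      exact hcb
    have hfin := ih (fun j => w j.succ) (fun j => b j.succ) (fun j => hw j.succ)
      (fun j => hwb j.succ) (fun j => c j.succ) (τ (c 0 * b 0) + d) hWd
    -- hfin : bal (∑ tail b) (τ (c 0 * b 0) + d)
    have heq : (∑ j : Fin (p + 1), c j * b j) + τ d =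
        (∑ j : Fin p, c j.succ * b j.succ) + τ (τ (c 0 * b 0) + d) := by
      rw [Fin.sum_univ_succ, hadd, hinv]; ring
    unfold bal
    rw [heq]
    exact hfin

end Aux

/-- If for thin `x` the balances `b ∇ x` and `x ∇ d` imply `b ∇ d`, `V ∖ {0}` is closed
under multiplication, and `S` is additively generated by `V`, then the weak transitivity
of scalar balances holds, and consequently `S` allows weak balance elimination. -/
theorem stmt11 [CommSemiring S] (τ : S → S) (hτ : IsSymmetry τ)
    (V : Set S) (hne : bSet τ ≠ Set.univ) (hV : IsThin τ V)
    (h1 : ∀ x ∈ V, ∀ b d : S, bal τ b x → bal τ x d → bal τ b d)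
    (h2 : ∀ x ∈ V, ∀ y ∈ V, x ≠ 0 → y ≠ 0 → x * y ∈ V ∧ x * y ≠ 0)
    (h3 : ∀ s : S, ∃ l : List S, (∀ x ∈ l, x ∈ V) ∧ l.sum = s) :
    (∀ b c d : S, ∀ x ∈ V, bal τ x b → bal τ (c * x) d → bal τ (c * b) d) ∧
    AllowsWeakElim τ V := by
  have hV0 : (0 : S) ∈ V := hV.1
  have hkey := keyV hτ hV0 h1 h2 h3
  refine ⟨fun b c d x hx hxb hcxd => hkey x hx b c d hxb hcxd, h2, ?_⟩
  intro n p a ha C b d x hxV hab hCd i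
  -- scale the i-th row balance by a
  have hscaled : bal τ (∑ j, C i j * (a * x j)) (a * d i) := by
    have := bal_smul' hτ a (hCd i)
    have heq : (∑ j, C i j * (a * x j)) = a * ∑ j, C i j * x j := by
      rw [Finset.mul_sum]
      exact Finset.sum_congr rfl fun j _ => by ring
    rwa [heq]
  exact sumSubstV hτ hV0 h1 h2 h3 p (fun j => a * x j) b
    (fun j => mulV' hV0 h2 ha (hxV j)) hab (fun j => C i j) (a * d i) hscaled
end
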